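/- arXiv:2602.07285 — 6 statements merged into one kernel-verified Lean document; each statement's English description precedes it below -/
import Mathlib

section
/- Let 0 < μ < 1 and define k* := min{k : μ_k ≥ μ}. The classifier R* based on S given by the selection rule P(R*=1 | S=s_i) = 1 for i < k*, P(R*=1 | S=s_{k*}) = (μ − μ_{k*−1})/P(S=s_{k*}), and P(R*=1 | S=s_i) = 0 for i > k*, satisfies P(R*=1) = μ, PPV(R*) = p*(μ) and FOR(R*) = q*(μ); that is, among all nonconstant classifiers based on S with selection rate μ, R* simultaneously maximizes the positive predictive value and minimizes the false omission rate. -/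
open Finset

/-!
Single-group setting.  A finite probability space `(Ω, P)`, a binary target `Y` with
base rate `π := P(Y = 1)`, and a calibrated score `S` taking `m > 1` distinct values
`1 ≥ s_1 > ⋯ > s_m ≥ 0` (here 0-indexed: `s i` is the paper's `s_{i+1}`), each with
positive probability `w i = P(S = s i)`, are—via calibration
`P(Y = 1 ∣ S = s i) = s i`—completely described, for the purposes of classifiers
based on `S`, by the data below.  A (possibly randomized) binary classifier `R`
based on `S` (i.e. `P(R = 1 ∣ S, Y) = P(R = 1 ∣ S)`) is in turn determined by its
selection rule `t i = P(R = 1 ∣ S = s i)`, with `P(R = 1) = ∑ i, w i * t i`,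
`P(Y = 1, R = 1) = ∑ i, s i * w i * t i`, `PPV(R) = P(Y = 1 ∣ R = 1)` and
`FOR(R) = P(Y = 1 ∣ R = 0)` as given below.
-/
structure CalibScore where
  m : ℕ
  s : ℕ → ℝ
  w : ℕ → ℝ
  one_lt_m : 1 < m
  s_nonneg : ∀ i, i < m → 0 ≤ s i
  s_le_one : ∀ i, i < m → s i ≤ 1
  s_desc : ∀ i j, i < j → j < m → s j < s i
  w_pos : ∀ i, i < m → 0 < w i
  w_sum : ∑ i ∈ Finset.range m, w i = 1

namespace CalibScore

/-- Base rate `π = P(Y = 1) = E[S]` (by calibration). -/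
noncomputable def pi (D : CalibScore) : ℝ := ∑ i ∈ Finset.range D.m, D.s i * D.w i

/-- `t` is a selection rule (`t i = P(R = 1 ∣ S = s i)` for a classifier `R` based on `S`). -/
def IsSelRule (D : CalibScore) (t : ℕ → ℝ) : Prop := ∀ i, i < D.m → 0 ≤ t i ∧ t i ≤ 1

/-- Selection rate `μ = P(R = 1)`. -/
noncomputable def selRate (D : CalibScore) (t : ℕ → ℝ) : ℝ :=
  ∑ i ∈ Finset.range D.m, D.w i * t i

/-- `P(Y = 1, R = 1) = ∑ i, s i * P(S = s i) * P(R = 1 ∣ S = s i)` (by calibration). -/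
noncomputable def posSel (D : CalibScore) (t : ℕ → ℝ) : ℝ :=
  ∑ i ∈ Finset.range D.m, D.s i * D.w i * t i

/-- `PPV(R) = P(Y = 1 ∣ R = 1)`. -/
noncomputable def ppv (D : CalibScore) (t : ℕ → ℝ) : ℝ := D.posSel t / D.selRate t

/-- `FOR(R) = P(Y = 1 ∣ R = 0)`. -/
noncomputable def forr (D : CalibScore) (t : ℕ → ℝ) : ℝ :=
  (D.pi - D.posSel t) / (1 - D.selRate t)

/-- `(p, q)` is feasible with selection rate `μ`: attained by a nonconstant
classifier based on `S` with `P(R = 1) = μ`. -/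
def FeasibleWith (D : CalibScore) (μ p q : ℝ) : Prop :=
  0 < μ ∧ μ < 1 ∧ ∃ t, D.IsSelRule t ∧ D.selRate t = μ ∧ D.ppv t = p ∧ D.forr t = q

/-- The feasible region `C`. -/
def Feasible (D : CalibScore) (p q : ℝ) : Prop := ∃ μ, D.FeasibleWith μ p q

/-- `μ_k = ∑_{i ≤ k} P(S = s_i)` (1-based `k`; `μ_0 = 0`). -/
noncomputable def muk (D : CalibScore) (k : ℕ) : ℝ := ∑ i ∈ Finset.range k, D.w i

/-- `c_k = ∑_{i < k} P(S = s_i) (s_i − s_k)` (1-based `k`). -/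
noncomputable def ck (D : CalibScore) (k : ℕ) : ℝ :=
  ∑ i ∈ Finset.range (k - 1), D.w i * (D.s i - D.s (k - 1))

/-- `I_k = (μ_{k−1}, μ_k] ∩ (0, 1)` (1-based `k`). -/
def Ik (D : CalibScore) (k : ℕ) : Set ℝ :=
  Set.Ioc (D.muk (k - 1)) (D.muk k) ∩ Set.Ioo 0 1

/-- `p*(μ)`: the supremum of `p` over pairs `(p, q)` feasible with `μ` having `q ≤ π ≤ p`. -/
noncomputable def pStar (D : CalibScore) (μ : ℝ) : ℝ :=
  sSup {p | ∃ q, D.FeasibleWith μ p q ∧ q ≤ D.pi ∧ D.pi ≤ p}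

/-- `q*(μ)`: the infimum of `q` over pairs `(p, q)` feasible with `μ` having `q ≤ π ≤ p`. -/
noncomputable def qStar (D : CalibScore) (μ : ℝ) : ℝ :=
  sInf {q | ∃ p, D.FeasibleWith μ p q ∧ q ≤ D.pi ∧ D.pi ≤ p}

/-- `p_k = s_k + c_k / μ_k` (1-based `k`), the breakpoint values of the boundary. -/
noncomputable def pkF (D : CalibScore) (k : ℕ) : ℝ := D.s (k - 1) + D.ck k / D.muk k

/-- The boundary formula `q(p) = ((π − c_k) p − s_k π) / (p − s_k − c_k)` on `J_k`
(1-based `k`). -/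
noncomputable def qF (D : CalibScore) (k : ℕ) (p : ℝ) : ℝ :=
  ((D.pi - D.ck k) * p - D.s (k - 1) * D.pi) / (p - D.s (k - 1) - D.ck k)

end CalibScore

namespace CalibScore

lemma posSel_le_aux (D : CalibScore) (t u : ℕ → ℝ) (c : ℝ)
    (h : ∀ i ∈ Finset.range D.m, 0 ≤ (D.s i - c) * (D.w i * (u i - t i)))
    (hsel : D.selRate t = D.selRate u) : D.posSel t ≤ D.posSel u := by
  have h0 : 0 ≤ ∑ i ∈ Finset.range D.m, (D.s i - c) * (D.w i * (u i - t i)) :=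
    Finset.sum_nonneg h
  have hexp : ∑ i ∈ Finset.range D.m, (D.s i - c) * (D.w i * (u i - t i))
      = (D.posSel u - D.posSel t) - c * (D.selRate u - D.selRate t) := by
    simp only [posSel, selRate, ← Finset.sum_sub_distrib, Finset.mul_sum]
    exact Finset.sum_congr rfl fun i _ => by ring
  rw [hexp, hsel] at h0
  linarith

end CalibScore

/-- For `0 < μ < 1` and `k* = min {k ∣ μ_k ≥ μ}` (captured by `hge`
and `hmin`), the soft-thresholding classifier `R*` given by the displayed selection
rule has `P(R* = 1) = μ`, `PPV(R*) = p*(μ)` and `FOR(R*) = q*(μ)`; that is, among all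
nonconstant classifiers based on `S` with selection rate `μ` (and `q ≤ π ≤ p`), it
simultaneously maximizes the PPV and minimizes the FOR. -/
theorem stmt0 (D : CalibScore) (μ : ℝ) (hμ0 : 0 < μ) (hμ1 : μ < 1)
    (kst : ℕ) (hk1 : 1 ≤ kst) (hkm : kst ≤ D.m)
    (hge : μ ≤ D.muk kst)
    (hmin : ∀ j, j < kst → D.muk j < μ) :
    let tsel : ℕ → ℝ := fun i =>
      if i + 1 < kst then 1
      else if i + 1 = kst then (μ - D.muk (kst - 1)) / D.w (kst - 1)
      else 0
    D.IsSelRule tsel ∧ D.selRate tsel = μ ∧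
      D.ppv tsel = D.pStar μ ∧ D.forr tsel = D.qStar μ ∧
      ∀ p q : ℝ, D.FeasibleWith μ p q → q ≤ D.pi → D.pi ≤ p →
        p ≤ D.ppv tsel ∧ D.forr tsel ≤ q := by
  intro tsel
  have hklt : kst - 1 < D.m := by omega
  have hwpos : 0 < D.w (kst - 1) := D.w_pos _ hklt
  have hksucc : kst - 1 + 1 = kst := by omega
  have hmuk : D.muk kst = D.muk (kst - 1) + D.w (kst - 1) := by
    unfold CalibScore.muk
    rw [← hksucc, Finset.sum_range_succ]
    simp
  have hlow : D.muk (kst - 1) < μ := hmin _ (by omega)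
  set f : ℝ := (μ - D.muk (kst - 1)) / D.w (kst - 1) with hf
  have hf0 : 0 ≤ f := div_nonneg (by linarith) hwpos.le
  have hf1 : f ≤ 1 := by
    rw [hf, div_le_one hwpos]; linarith [hmuk ▸ hge]
  -- tsel values
  have htv1 : ∀ i, i + 1 < kst → tsel i = 1 := by
    intro i hi; simp only [tsel, if_pos hi]
  have htv2 : tsel (kst - 1) = f := by
    simp only [tsel]; rw [if_neg (by omega : ¬(kst - 1 + 1 < kst)), if_pos hksucc]
  have htv3 : ∀ i, kst ≤ i → tsel i = 0 := by
    intro i hi; simp only [tsel]; rw [if_neg (by omega), if_neg (by omega)]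
  have hrule : D.IsSelRule tsel := by
    intro i hi
    rcases lt_trichotomy (i + 1) kst with h | h | h
    · rw [htv1 i h]; exact ⟨zero_le_one, le_rfl⟩
    · have : i = kst - 1 := by omega
      rw [this, htv2]; exact ⟨hf0, hf1⟩
    · rw [htv3 i (by omega)]; exact ⟨le_rfl, zero_le_one⟩
  have hsel : D.selRate tsel = μ := by
    unfold CalibScore.selRate
    rw [← Finset.sum_subset (Finset.range_subset_range.2 hkm)
      (fun i _ hi => by rw [htv3 i (by simpa using hi), mul_zero])]
    rw [← hksucc, Finset.sum_range_succ, htv2]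
    have : ∑ i ∈ Finset.range (kst - 1), D.w i * tsel i
        = ∑ i ∈ Finset.range (kst - 1), D.w i := by
      refine Finset.sum_congr rfl fun i hi => ?_
      rw [htv1 i (by have := Finset.mem_range.1 hi; omega), mul_one]
    rw [this, hf]
    field_simp
    unfold CalibScore.muk
    ring
  -- key optimality: any rule with same selRate has smaller posSel
  have hkey : ∀ t : ℕ → ℝ, D.IsSelRule t → D.selRate t = μ →
      D.posSel t ≤ D.posSel tsel := by
    intro t ht hts
    refine D.posSel_le_aux t tsel (D.s (kst - 1)) ?_ (by rw [hts, hsel])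
    intro i hi
    have him : i < D.m := Finset.mem_range.1 hi
    rcases lt_trichotomy (i + 1) kst with h | h | h
    · have hs : D.s (kst - 1) < D.s i := D.s_desc i (kst - 1) (by omega) hklt
      have : 0 ≤ tsel i - t i := by rw [htv1 i h]; linarith [(ht i him).2]
      exact mul_nonneg (by linarith) (mul_nonneg (D.w_pos i him).le this)
    · have : i = kst - 1 := by omega
      rw [this, sub_self, zero_mul]
    · have hs : D.s i < D.s (kst - 1) := D.s_desc (kst - 1) i (by omega) him
      have h1 : tsel i - t i ≤ 0 := by rw [htv3 i (by omega)]; linarith [(ht i him).1]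
      have h2 : D.w i * (tsel i - t i) ≤ 0 :=
        mul_nonpos_of_nonneg_of_nonpos (D.w_pos i him).le h1
      nlinarith
  -- the constant rule
  have hconst : D.posSel (fun _ => μ) = μ * D.pi ∧ D.selRate (fun _ => μ) = μ := by
    constructor
    · unfold CalibScore.posSel CalibScore.pi
      rw [Finset.mul_sum]
      exact Finset.sum_congr rfl fun i _ => by ring
    · unfold CalibScore.selRate
      rw [← Finset.sum_mul, D.w_sum, one_mul]
  have hps : μ * D.pi ≤ D.posSel tsel := by
    rw [← hconst.1]
    exact hkey _ (fun i _ => ⟨hμ0.le, hμ1.le⟩) hconst.2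
  have hppv_ge : D.pi ≤ D.ppv tsel := by
    unfold CalibScore.ppv
    rw [hsel, le_div_iff₀ hμ0]
    linarith
  have hforr_le : D.forr tsel ≤ D.pi := by
    unfold CalibScore.forr
    rw [hsel, div_le_iff₀ (by linarith)]
    nlinarith
  -- domination of any feasible pair
  have hdom : ∀ p q : ℝ, D.FeasibleWith μ p q → p ≤ D.ppv tsel ∧ D.forr tsel ≤ q := by
    rintro p q ⟨-, -, t, ht, hts, hp, hq⟩
    have hle := hkey t ht hts
    constructor
    · rw [← hp]; unfold CalibScore.ppv
      rw [hts, hsel]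
      exact (div_le_div_iff_of_pos_right hμ0).2 hle
    · rw [← hq]; unfold CalibScore.forr
      rw [hts, hsel]
      exact (div_le_div_iff_of_pos_right (by linarith)).2 (by linarith)
  have hfeas : D.FeasibleWith μ (D.ppv tsel) (D.forr tsel) :=
    ⟨hμ0, hμ1, tsel, hrule, hsel, rfl, rfl⟩
  refine ⟨hrule, hsel, ?_, ?_, fun p q hpq _ _ => hdom p q hpq⟩
  · -- pStar
    have hmem : D.ppv tsel ∈ {p | ∃ q, D.FeasibleWith μ p q ∧ q ≤ D.pi ∧ D.pi ≤ p} :=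
      ⟨D.forr tsel, hfeas, hforr_le, hppv_ge⟩
    have hub : ∀ p ∈ {p | ∃ q, D.FeasibleWith μ p q ∧ q ≤ D.pi ∧ D.pi ≤ p},
        p ≤ D.ppv tsel := by
      rintro p ⟨q, hpq, -, -⟩; exact (hdom p q hpq).1
    exact le_antisymm (le_csSup ⟨_, hub⟩ hmem) (csSup_le ⟨_, hmem⟩ hub)
  · -- qStar
    have hmem : D.forr tsel ∈ {q | ∃ p, D.FeasibleWith μ p q ∧ q ≤ D.pi ∧ D.pi ≤ p} :=
      ⟨D.ppv tsel, hfeas, hforr_le, hppv_ge⟩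
    have hlb : ∀ q ∈ {q | ∃ p, D.FeasibleWith μ p q ∧ q ≤ D.pi ∧ D.pi ≤ p},
        D.forr tsel ≤ q := by
      rintro q ⟨p, hpq, -, -⟩; exact (hdom p q hpq).2
    exact le_antisymm (le_csInf ⟨_, hmem⟩ hlb) (csInf_le ⟨_, hlb⟩ hmem)
end

section
/- For every k with 1 < k ≤ m and every μ ∈ I_k = (μ_{k−1}, μ_k] ∩ (0,1), the maximal positive predictive value at selection rate μ satisfies p*(μ) = s_k + c_k/μ; equivalently, writing p = p*(μ), one has μ = c_k/(p − s_k), and the corresponding minimal false omission rate satisfies q*(μ) = ((π − c_k)p − s_k π)/(p − s_k − c_k). -/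
open Finset

/-- Splitting a sum over `range m` at position `k - 1` (for `1 < k ≤ m`). -/
lemma sum_split (D : CalibScore) (k : ℕ) (hk : 1 < k) (hkm : k ≤ D.m) (f : ℕ → ℝ) :
    ∑ i ∈ Finset.range D.m, f i
      = (∑ i ∈ Finset.range (k - 1), f i) + f (k - 1) + ∑ i ∈ Finset.Ico k D.m, f i := by
  have h1 : ∑ i ∈ Finset.range k, f i = (∑ i ∈ Finset.range (k - 1), f i) + f (k - 1) := by
    conv_lhs => rw [show k = (k - 1) + 1 by omega]
    rw [Finset.sum_range_succ]
  rw [← h1, Finset.range_eq_Ico, Finset.range_eq_Ico]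
  exact (Finset.sum_Ico_consecutive f (Nat.zero_le k) hkm).symm

/-- Key rearrangement inequality: any selection rule `t` satisfies
`posSel t ≤ c_k + s_{k-1} * selRate t`. -/
lemma posSel_le (D : CalibScore) (k : ℕ) (hk : 1 < k) (hkm : k ≤ D.m)
    (t : ℕ → ℝ) (ht : D.IsSelRule t) :
    D.posSel t ≤ D.ck k + D.s (k - 1) * D.selRate t := by
  have h1 : D.posSel t - D.s (k - 1) * D.selRate t
      = ∑ i ∈ Finset.range D.m, (D.s i - D.s (k - 1)) * (D.w i * t i) := by
    unfold CalibScore.posSel CalibScore.selRate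
    rw [Finset.mul_sum, ← Finset.sum_sub_distrib]
    exact Finset.sum_congr rfl (fun i _ => by ring)
  have h2 : ∀ i ∈ Finset.range D.m, (D.s i - D.s (k - 1)) * (D.w i * t i)
      ≤ (if i < k - 1 then D.w i * (D.s i - D.s (k - 1)) else 0) := by
    intro i hi
    rw [Finset.mem_range] at hi
    have hw := D.w_pos i hi
    have hti := ht i hi
    by_cases h : i < k - 1
    · rw [if_pos h]
      have hs : 0 ≤ D.s i - D.s (k - 1) :=
        le_of_lt (sub_pos.mpr (D.s_desc i (k - 1) h (by omega)))
      nlinarith [mul_nonneg (mul_nonneg hw.le hs) (sub_nonneg.mpr hti.2)]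
    · rw [if_neg h]
      have hs : D.s i - D.s (k - 1) ≤ 0 := by
        rcases Nat.eq_or_lt_of_le (Nat.le_of_not_lt h) with h' | h'
        · rw [← h']; ring_nf; simp
        · exact le_of_lt (sub_neg.mpr (D.s_desc (k - 1) i h' hi))
      exact mul_nonpos_of_nonpos_of_nonneg hs (mul_nonneg hw.le hti.1)
  have h3 : ∑ i ∈ Finset.range D.m,
      (if i < k - 1 then D.w i * (D.s i - D.s (k - 1)) else 0) = D.ck k := by
    unfold CalibScore.ck
    rw [← Finset.sum_subset (Finset.range_subset_range.mpr (show k - 1 ≤ D.m by omega))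
      (by intro i _ hi; rw [Finset.mem_range, not_lt] at hi; rw [if_neg (by omega)])]
    exact Finset.sum_congr rfl (fun i hi => by
      rw [Finset.mem_range] at hi; rw [if_pos hi])
  have := Finset.sum_le_sum h2
  rw [← h1, h3] at this
  linarith

/-- For `1 < k ≤ m` and `μ ∈ I_k`, one has `p*(μ) = s_k + c_k / μ`;
equivalently, writing `p = p*(μ)`, `μ = c_k / (p − s_k)`, and the minimal false
omission rate satisfies `q*(μ) = ((π − c_k) p − s_k π) / (p − s_k − c_k)`.
(Indices are 1-based: the paper's `s_k` is `D.s (k - 1)`.) -/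
theorem stmt1 (D : CalibScore) (k : ℕ) (hk : 1 < k) (hkm : k ≤ D.m)
    (μ : ℝ) (hμ : μ ∈ D.Ik k) :
    D.pStar μ = D.s (k - 1) + D.ck k / μ ∧
    μ = D.ck k / (D.pStar μ - D.s (k - 1)) ∧
    D.qStar μ =
      ((D.pi - D.ck k) * D.pStar μ - D.s (k - 1) * D.pi) /
        (D.pStar μ - D.s (k - 1) - D.ck k) := by
  obtain ⟨⟨hμl, hμr⟩, hμ0, hμ1⟩ := hμ
  have hkm1 : k - 1 < D.m := by omega
  set sk := D.s (k - 1) with hsk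
  set c := D.ck k with hcdef
  set π := D.pi with hπ
  -- c > 0
  have hc : 0 < c := by
    rw [hcdef]; unfold CalibScore.ck
    apply Finset.sum_pos
    · intro i hi
      rw [Finset.mem_range] at hi
      exact mul_pos (D.w_pos i (by omega))
        (sub_pos.mpr (D.s_desc i (k - 1) hi hkm1))
    · exact ⟨0, Finset.mem_range.mpr (by omega)⟩
  have hwk : 0 < D.w (k - 1) := D.w_pos (k - 1) hkm1
  have hmuk : D.muk k = D.muk (k - 1) + D.w (k - 1) := by
    unfold CalibScore.muk
    conv_lhs => rw [show k = (k - 1) + 1 by omega]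
    rw [Finset.sum_range_succ]
  -- the candidate threshold rule
  set t0 : ℕ → ℝ := fun i =>
    if i < k - 1 then 1 else if i = k - 1 then (μ - D.muk (k - 1)) / D.w (k - 1) else 0 with ht0
  have ht0v : ∀ i, t0 i =
      if i < k - 1 then (1 : ℝ)
      else if i = k - 1 then (μ - D.muk (k - 1)) / D.w (k - 1) else 0 := fun i => rfl
  have hrule : D.IsSelRule t0 := by
    intro i hi
    rw [ht0v i]
    by_cases h : i < k - 1
    · rw [if_pos h]; norm_num
    · rw [if_neg h]
      by_cases h' : i = k - 1
      · rw [if_pos h']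
        exact ⟨div_nonneg (by linarith) hwk.le,
          by rw [div_le_one hwk]; linarith [hmuk, hμr]⟩
      · rw [if_neg h']; norm_num
  have hrate : D.selRate t0 = μ := by
    unfold CalibScore.selRate
    rw [sum_split D k hk hkm]
    have e1 : ∑ i ∈ Finset.range (k - 1), D.w i * t0 i = D.muk (k - 1) := by
      unfold CalibScore.muk
      exact Finset.sum_congr rfl (fun i hi => by
        rw [Finset.mem_range] at hi; rw [ht0v i, if_pos hi, mul_one])
    have e2 : D.w (k - 1) * t0 (k - 1) = μ - D.muk (k - 1) := by
      rw [ht0v (k - 1), if_neg (lt_irrefl _), if_pos rfl]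
      field_simp
    have e3 : ∑ i ∈ Finset.Ico k D.m, D.w i * t0 i = 0 := by
      apply Finset.sum_eq_zero
      intro i hi
      rw [Finset.mem_Ico] at hi
      rw [ht0v i, if_neg (by omega), if_neg (by omega), mul_zero]
    rw [e1, e2, e3]; ring
  have hceq : c = (∑ i ∈ Finset.range (k - 1), D.s i * D.w i) - sk * D.muk (k - 1) := by
    rw [hcdef, hsk]; unfold CalibScore.ck CalibScore.muk
    rw [Finset.mul_sum, ← Finset.sum_sub_distrib]
    exact Finset.sum_congr rfl (fun i _ => by ring)
  have hpos : D.posSel t0 = c + sk * μ := by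
    unfold CalibScore.posSel
    rw [sum_split D k hk hkm]
    have e1 : ∑ i ∈ Finset.range (k - 1), D.s i * D.w i * t0 i
        = ∑ i ∈ Finset.range (k - 1), D.s i * D.w i := by
      exact Finset.sum_congr rfl (fun i hi => by
        rw [Finset.mem_range] at hi; rw [ht0v i, if_pos hi, mul_one])
    have e2 : D.s (k - 1) * D.w (k - 1) * t0 (k - 1) = sk * (μ - D.muk (k - 1)) := by
      rw [ht0v (k - 1), if_neg (lt_irrefl _), if_pos rfl, hsk]
      field_simp
    have e3 : ∑ i ∈ Finset.Ico k D.m, D.s i * D.w i * t0 i = 0 := by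
      apply Finset.sum_eq_zero
      intro i hi
      rw [Finset.mem_Ico] at hi
      rw [ht0v i, if_neg (by omega), if_neg (by omega), mul_zero]
    rw [e1, e2, e3, hceq]; ring
  -- key bound for all rules of rate μ
  have hkey : ∀ t : ℕ → ℝ, D.IsSelRule t → D.selRate t = μ → D.posSel t ≤ c + sk * μ := by
    intro t ht hr
    have := posSel_le D k hk hkm t ht
    rw [hr] at this; exact this
  -- constant rule gives π μ ≤ c + sk μ
  have hπμ : π * μ ≤ c + sk * μ := by
    have hconst : D.IsSelRule (fun _ => μ) := fun i _ => ⟨hμ0.le, hμ1.le⟩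
    have hr : D.selRate (fun _ => μ) = μ := by
      unfold CalibScore.selRate
      rw [← Finset.sum_mul, D.w_sum, one_mul]
    have hp : D.posSel (fun _ => μ) = π * μ := by
      rw [hπ]; unfold CalibScore.posSel CalibScore.pi
      rw [← Finset.sum_mul]
    have := hkey _ hconst hr
    rw [hp] at this; exact this
  set pmax : ℝ := sk + c / μ with hpmax
  have hpmaxμ : pmax * μ = c + sk * μ := by
    rw [hpmax]; field_simp; ring
  set qmin : ℝ := (π - (c + sk * μ)) / (1 - μ) with hqmin
  have h1μ : 0 < 1 - μ := by linarith
  -- candidate attains (pmax, qmin)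
  have hppv0 : D.ppv t0 = pmax := by
    unfold CalibScore.ppv
    rw [hrate, hpos, ← hpmaxμ, mul_div_assoc, div_self hμ0.ne', mul_one]
  have hfor0 : D.forr t0 = qmin := by
    unfold CalibScore.forr
    rw [hrate, hpos, hqmin, hπ]
  have hqπ : qmin ≤ π := by
    rw [hqmin, div_le_iff₀ h1μ]; nlinarith
  have hπp : π ≤ pmax := by
    have : π * μ ≤ pmax * μ := by rw [hpmaxμ]; exact hπμ
    exact le_of_mul_le_mul_right this hμ0
  have hfeas : D.FeasibleWith μ pmax qmin :=
    ⟨hμ0, hμ1, t0, hrule, hrate, hppv0, hfor0⟩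
  -- pStar = pmax
  have hub : ∀ p ∈ {p | ∃ q, D.FeasibleWith μ p q ∧ q ≤ D.pi ∧ D.pi ≤ p}, p ≤ pmax := by
    rintro p ⟨q, ⟨-, -, t, ht, hr, hppv, -⟩, -, -⟩
    rw [← hppv]; unfold CalibScore.ppv
    rw [hr, div_le_iff₀ hμ0, hpmaxμ]
    exact hkey t ht hr
  have hmem : pmax ∈ {p | ∃ q, D.FeasibleWith μ p q ∧ q ≤ D.pi ∧ D.pi ≤ p} :=
    ⟨qmin, hfeas, hqπ, hπp⟩
  have hpstar : D.pStar μ = pmax := by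
    unfold CalibScore.pStar
    exact le_antisymm (csSup_le ⟨pmax, hmem⟩ hub) (le_csSup ⟨pmax, hub⟩ hmem)
  -- qStar = qmin
  have hlb : ∀ q ∈ {q | ∃ p, D.FeasibleWith μ p q ∧ q ≤ D.pi ∧ D.pi ≤ p}, qmin ≤ q := by
    rintro q ⟨p, ⟨-, -, t, ht, hr, -, hfor⟩, -, -⟩
    rw [← hfor]; unfold CalibScore.forr
    rw [hr, hqmin, div_le_div_iff₀ h1μ h1μ]
    have := hkey t ht hr
    rw [hπ]; nlinarith
  have hqmem : qmin ∈ {q | ∃ p, D.FeasibleWith μ p q ∧ q ≤ D.pi ∧ D.pi ≤ p} :=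
    ⟨pmax, hfeas, hqπ, hπp⟩
  have hqstar : D.qStar μ = qmin := by
    unfold CalibScore.qStar
    exact le_antisymm (csInf_le ⟨qmin, hlb⟩ hqmem) (le_csInf ⟨qmin, hqmem⟩ hlb)
  refine ⟨hpstar, ?_, ?_⟩
  · rw [hpstar, hpmax]
    have h2 : sk + c / μ - sk = c / μ := by ring
    rw [h2, div_div_eq_mul_div, mul_comm, mul_div_assoc, div_self hc.ne', mul_one]
  · rw [hqstar, hpstar, hqmin, hpmax]
    have hden : sk + c / μ - sk - c ≠ 0 := by
      have : sk + c / μ - sk - c = c * (1 - μ) / μ := by field_simp; ring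
      rw [this]
      positivity
    rw [div_eq_div_iff h1μ.ne' hden]
    field_simp
    ring
end

section
/- The closure of the nontrivial boundary of the feasible region C consists of a continuous nondecreasing curve q(p) on [π, s_1), defined piecewise on each interval J_k := p*(I_k) (for 1 < k ≤ m) by q(p) = ((π − c_k)p − s_k π)/(p − s_k − c_k), together with the vertical segment {s_1} × [q_1, π], where q_1 := (π − P(S=s_1)·s_1)/(1 − P(S=s_1)). That is, the set of points (p*(μ), q*(μ)) for μ ∈ (0,1), together with its limit points, equals the graph of this curve together with that vertical segment. -/
open Finset

open Finset

section Chunk1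
variable (D : CalibScore)
namespace CalibScore

lemma m_pos : 0 < D.m := lt_trans one_pos D.one_lt_m

lemma s_anti {i j : ℕ} (hij : i ≤ j) (hj : j < D.m) : D.s j ≤ D.s i := by
  rcases eq_or_lt_of_le hij with h | h
  · rw [h]
  · exact (D.s_desc _ _ h hj).le

lemma muk_zero : D.muk 0 = 0 := by simp [muk]

lemma muk_one : D.muk 1 = D.w 0 := by simp [muk]

lemma muk_m : D.muk D.m = 1 := D.w_sum

lemma muk_lt {a b : ℕ} (hab : a < b) (hb : b ≤ D.m) : D.muk a < D.muk b := by
  unfold muk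
  have h1 : ∑ i ∈ Finset.range a, D.w i + ∑ i ∈ Finset.Ico a b, D.w i
      = ∑ i ∈ Finset.range b, D.w i := Finset.sum_range_add_sum_Ico _ hab.le
  have h2 : 0 < ∑ i ∈ Finset.Ico a b, D.w i := by
    apply Finset.sum_pos
    · intro i hi
      exact D.w_pos i (lt_of_lt_of_le (Finset.mem_Ico.1 hi).2 hb)
    · exact Finset.nonempty_Ico.2 hab
  linarith

lemma muk_le {a b : ℕ} (hab : a ≤ b) (hb : b ≤ D.m) : D.muk a ≤ D.muk b := by
  rcases eq_or_lt_of_le hab with h | h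
  · rw [h]
  · exact (D.muk_lt h hb).le

lemma muk_pos {k : ℕ} (hk : 1 ≤ k) (hkm : k ≤ D.m) : 0 < D.muk k := by
  have := D.muk_lt (lt_of_lt_of_le one_pos hk) hkm
  rwa [muk_zero] at this

lemma muk_lt_one {k : ℕ} (hk : k < D.m) : D.muk k < 1 := by
  have := D.muk_lt hk le_rfl
  rwa [muk_m] at this

lemma muk_le_one {k : ℕ} (hk : k ≤ D.m) : D.muk k ≤ 1 := by
  have := D.muk_le hk le_rfl
  rwa [muk_m] at this

lemma ck_one : D.ck 1 = 0 := by simp [ck]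

lemma ck_succ_eq (j : ℕ) : D.ck (j + 1) = ∑ i ∈ Finset.range j, D.w i * (D.s i - D.s j) := by
  simp [ck]

lemma ck_nonneg {k : ℕ} (hk : k ≤ D.m) (hk1 : 1 ≤ k) : 0 ≤ D.ck k := by
  obtain ⟨j, rfl⟩ := Nat.exists_eq_add_of_le hk1
  rw [Nat.add_comm, ck_succ_eq]
  apply Finset.sum_nonneg
  intro i hi
  have hi' := Finset.mem_range.1 hi
  have hj : j < D.m := by omega
  exact mul_nonneg (D.w_pos i (by omega)).le
    (sub_nonneg.2 (D.s_anti hi'.le hj))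

lemma ck_pos {k : ℕ} (hk : k ≤ D.m) (hk2 : 2 ≤ k) : 0 < D.ck k := by
  obtain ⟨j, rfl⟩ := Nat.exists_eq_add_of_le (le_trans one_le_two hk2)
  rw [Nat.add_comm, ck_succ_eq]
  apply Finset.sum_pos'
  · intro i hi
    have hi' := Finset.mem_range.1 hi
    exact mul_nonneg (D.w_pos i (by omega)).le
      (sub_nonneg.2 (D.s_anti hi'.le (by omega)))
  · refine ⟨0, Finset.mem_range.2 (by omega), ?_⟩
    have h0 : (0:ℕ) < j := by omega
    exact mul_pos (D.w_pos 0 (by omega)) (sub_pos.2 (D.s_desc 0 j h0 (by omega)))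

lemma ck_succ_succ (j : ℕ) :
    D.ck (j + 2) = D.ck (j + 1) + D.muk (j + 1) * (D.s j - D.s (j + 1)) := by
  have h2 : D.ck (j+2) = ∑ i ∈ Finset.range (j+1), D.w i * (D.s i - D.s (j+1)) := by
    simp [ck]
  rw [h2, ck_succ_eq, muk, Finset.sum_range_succ, Finset.sum_range_succ]
  have : ∀ i ∈ Finset.range j, D.w i * (D.s i - D.s (j+1))
      = D.w i * (D.s i - D.s j) + D.w i * (D.s j - D.s (j+1)) := by intros; ring
  rw [Finset.sum_congr rfl this, Finset.sum_add_distrib, add_mul, ← Finset.sum_mul]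
  ring

lemma sum_w_mul_sub (j : ℕ) (S : Finset ℕ) :
    ∑ i ∈ S, D.w i * (D.s i - D.s j)
      = (∑ i ∈ S, D.s i * D.w i) - D.s j * ∑ i ∈ S, D.w i := by
  rw [Finset.mul_sum, ← Finset.sum_sub_distrib]
  exact Finset.sum_congr rfl fun i _ => by ring

lemma pi_sub_line (j : ℕ) (hj : j < D.m) :
    D.pi - (D.s j + D.ck (j + 1)) = ∑ i ∈ Finset.Ico j D.m, D.w i * (D.s i - D.s j) := by
  have h1 : (∑ i ∈ Finset.range j, D.s i * D.w i) + ∑ i ∈ Finset.Ico j D.m, D.s i * D.w i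
      = ∑ i ∈ Finset.range D.m, D.s i * D.w i := Finset.sum_range_add_sum_Ico _ hj.le
  have h2 : (∑ i ∈ Finset.range j, D.w i) + ∑ i ∈ Finset.Ico j D.m, D.w i
      = ∑ i ∈ Finset.range D.m, D.w i := Finset.sum_range_add_sum_Ico _ hj.le
  have e1 := D.sum_w_mul_sub j (Finset.range j)
  have e2 := D.sum_w_mul_sub j (Finset.Ico j D.m)
  have hw := D.w_sum
  have h3 : D.s j * ∑ i ∈ Finset.Ico j D.m, D.w i
      = D.s j * (1 - ∑ i ∈ Finset.range j, D.w i) := by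
    congr 1; linarith
  rw [ck_succ_eq, e1, e2, pi, h3]
  linarith

lemma pi_le_line (j : ℕ) (hj : j < D.m) : D.pi ≤ D.s j + D.ck (j + 1) := by
  have h := D.pi_sub_line j hj
  have hle : ∑ i ∈ Finset.Ico j D.m, D.w i * (D.s i - D.s j) ≤ 0 := by
    apply Finset.sum_nonpos
    intro i hi
    obtain ⟨hi1, hi2⟩ := Finset.mem_Ico.1 hi
    exact mul_nonpos_of_nonneg_of_nonpos (D.w_pos i hi2).le
      (sub_nonpos.2 (D.s_anti hi1 hi2))
  linarith

lemma pi_eq_top : D.pi = D.s (D.m - 1) + D.ck D.m := by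
  obtain ⟨j, hj⟩ : ∃ j, D.m = j + 1 := ⟨D.m - 1, by have := D.m_pos; omega⟩
  have hjm : j < D.m := by omega
  have h := D.pi_sub_line j hjm
  have : Finset.Ico j D.m = {j} := by rw [hj]; exact Nat.Ico_succ_singleton j
  rw [this, Finset.sum_singleton, sub_self, mul_zero] at h
  have hj1 : D.m - 1 = j := by omega
  rw [hj1, ← hj] at *
  linarith [h]

lemma pi_lt_s0 : D.pi < D.s 0 := by
  have h : ∀ i ∈ Finset.range D.m, D.s i * D.w i ≤ D.s 0 * D.w i := by
    intro i hi
    have := Finset.mem_range.1 hi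
    exact mul_le_mul_of_nonneg_right (D.s_anti (Nat.zero_le i) this) (D.w_pos i this).le
  have hstrict : ∃ i ∈ Finset.range D.m, D.s i * D.w i < D.s 0 * D.w i := by
    refine ⟨1, Finset.mem_range.2 D.one_lt_m, ?_⟩
    exact mul_lt_mul_of_pos_right (D.s_desc 0 1 one_pos D.one_lt_m) (D.w_pos 1 D.one_lt_m)
  have := Finset.sum_lt_sum h (by obtain ⟨i, hi, h'⟩ := hstrict; exact ⟨i, hi, h'⟩)
  calc D.pi < ∑ i ∈ Finset.range D.m, D.s 0 * D.w i := this
    _ = D.s 0 := by rw [← Finset.mul_sum, D.w_sum, mul_one]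

lemma sm_lt_pi : D.s (D.m - 1) < D.pi := by
  have hm := D.m_pos
  have h : ∀ i ∈ Finset.range D.m, D.s (D.m - 1) * D.w i ≤ D.s i * D.w i := by
    intro i hi
    have hi' := Finset.mem_range.1 hi
    exact mul_le_mul_of_nonneg_right (D.s_anti (by omega) (by omega)) (D.w_pos i hi').le
  have hstrict : D.s (D.m - 1) * D.w 0 < D.s 0 * D.w 0 := by
    have h01 : (0:ℕ) < D.m - 1 := by have := D.one_lt_m; omega
    exact mul_lt_mul_of_pos_right (D.s_desc 0 (D.m - 1) h01 (by omega)) (D.w_pos 0 D.m_pos)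
  have := Finset.sum_lt_sum h ⟨0, Finset.mem_range.2 D.m_pos, hstrict⟩
  calc D.s (D.m - 1) = ∑ i ∈ Finset.range D.m, D.s (D.m - 1) * D.w i := by
        rw [← Finset.mul_sum, D.w_sum, mul_one]
    _ < D.pi := this

end CalibScore
end Chunk1

namespace CalibScore
variable (D : CalibScore)

lemma posSel_le {t : ℕ → ℝ} (ht : D.IsSelRule t) (j : ℕ) (hj : j < D.m) :
    D.posSel t ≤ D.s j * D.selRate t + D.ck (j + 1) := by
  have h1 : D.posSel t - D.s j * D.selRate t
      = ∑ i ∈ Finset.range D.m, D.w i * t i * (D.s i - D.s j) := by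
    unfold posSel selRate
    rw [Finset.mul_sum, ← Finset.sum_sub_distrib]
    exact Finset.sum_congr rfl fun i _ => by ring
  have hsplit : (∑ i ∈ Finset.range j, D.w i * t i * (D.s i - D.s j))
      + ∑ i ∈ Finset.Ico j D.m, D.w i * t i * (D.s i - D.s j)
      = ∑ i ∈ Finset.range D.m, D.w i * t i * (D.s i - D.s j) :=
    Finset.sum_range_add_sum_Ico _ hj.le
  have hA : ∑ i ∈ Finset.range j, D.w i * t i * (D.s i - D.s j) ≤ D.ck (j + 1) := by
    rw [ck_succ_eq]
    apply Finset.sum_le_sum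
    intro i hi
    have hi' := Finset.mem_range.1 hi
    have him : i < D.m := by omega
    have hs : 0 ≤ D.s i - D.s j := sub_nonneg.2 (D.s_anti hi'.le hj)
    have hw := (D.w_pos i him).le
    have ht' := ht i him
    calc D.w i * t i * (D.s i - D.s j) ≤ D.w i * 1 * (D.s i - D.s j) := by
          apply mul_le_mul_of_nonneg_right _ hs
          exact mul_le_mul_of_nonneg_left ht'.2 hw
      _ = D.w i * (D.s i - D.s j) := by ring
  have hB : ∑ i ∈ Finset.Ico j D.m, D.w i * t i * (D.s i - D.s j) ≤ 0 := by
    apply Finset.sum_nonpos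
    intro i hi
    obtain ⟨hi1, hi2⟩ := Finset.mem_Ico.1 hi
    have hs : D.s i - D.s j ≤ 0 := sub_nonpos.2 (D.s_anti hi1 hi2)
    exact mul_nonpos_of_nonneg_of_nonpos
      (mul_nonneg (D.w_pos i hi2).le (ht i hi2).1) hs
  linarith

lemma const_rule (μ : ℝ) (h0 : 0 ≤ μ) (h1 : μ ≤ 1) :
    D.IsSelRule (fun _ => μ) ∧ D.selRate (fun _ => μ) = μ
      ∧ D.posSel (fun _ => μ) = D.pi * μ := by
  refine ⟨fun i _ => ⟨h0, h1⟩, ?_, ?_⟩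
  · unfold selRate; rw [← Finset.sum_mul, D.w_sum, one_mul]
  · unfold posSel; rw [← Finset.sum_mul]; rfl

lemma pi_mul_le_line {μ : ℝ} (h0 : 0 ≤ μ) (h1 : μ ≤ 1) (j : ℕ) (hj : j < D.m) :
    D.pi * μ ≤ D.s j * μ + D.ck (j + 1) := by
  obtain ⟨hr, hsel, hpos⟩ := D.const_rule μ h0 h1
  have := D.posSel_le hr j hj
  rw [hsel, hpos] at this
  exact this

/-- The threshold rule. -/
noncomputable def thr (j : ℕ) (μ : ℝ) : ℕ → ℝ :=
  fun i => if i < j then 1 else if i = j then (μ - D.muk j) / D.w j else 0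

lemma thr_spec (j : ℕ) (hj : j < D.m) {μ : ℝ}
    (hμ1 : D.muk j < μ) (hμ2 : μ ≤ D.muk (j + 1)) :
    D.IsSelRule (D.thr j μ) ∧ D.selRate (D.thr j μ) = μ
      ∧ D.posSel (D.thr j μ) = D.s j * μ + D.ck (j + 1) := by
  have hwj := D.w_pos j hj
  have hmuk : D.muk (j + 1) = D.muk j + D.w j := by
    unfold muk; rw [Finset.sum_range_succ]
  refine ⟨?_, ?_, ?_⟩
  · intro i him
    unfold thr
    by_cases h1 : i < j
    · simp [h1]
    · by_cases h2 : i = j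
      · rw [if_neg h1, if_pos h2]
        exact ⟨div_nonneg (by linarith) hwj.le, (div_le_one hwj).2 (by linarith)⟩
      · simp [h1, h2]
  · unfold selRate
    have hsplit : (∑ i ∈ Finset.range (j+1), D.w i * D.thr j μ i)
        + ∑ i ∈ Finset.Ico (j+1) D.m, D.w i * D.thr j μ i
        = ∑ i ∈ Finset.range D.m, D.w i * D.thr j μ i :=
      Finset.sum_range_add_sum_Ico _ (by omega)
    have h2 : ∑ i ∈ Finset.Ico (j+1) D.m, D.w i * D.thr j μ i = 0 := by
      apply Finset.sum_eq_zero
      intro i hi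
      obtain ⟨hi1, _⟩ := Finset.mem_Ico.1 hi
      unfold thr
      have : ¬ i < j := by omega
      have : i ≠ j := by omega
      simp [*]
    have h3 : ∑ i ∈ Finset.range (j+1), D.w i * D.thr j μ i
        = (∑ i ∈ Finset.range j, D.w i) + D.w j * ((μ - D.muk j) / D.w j) := by
      rw [Finset.sum_range_succ]
      congr 1
      · apply Finset.sum_congr rfl
        intro i hi
        have := Finset.mem_range.1 hi
        unfold thr; simp [this]
      · unfold thr; simp
    rw [← hsplit, h2, h3, mul_div_cancel₀ _ (ne_of_gt hwj)]
    unfold muk; ring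
  · unfold posSel
    have hsplit : (∑ i ∈ Finset.range (j+1), D.s i * D.w i * D.thr j μ i)
        + ∑ i ∈ Finset.Ico (j+1) D.m, D.s i * D.w i * D.thr j μ i
        = ∑ i ∈ Finset.range D.m, D.s i * D.w i * D.thr j μ i :=
      Finset.sum_range_add_sum_Ico _ (by omega)
    have h2 : ∑ i ∈ Finset.Ico (j+1) D.m, D.s i * D.w i * D.thr j μ i = 0 := by
      apply Finset.sum_eq_zero
      intro i hi
      obtain ⟨hi1, _⟩ := Finset.mem_Ico.1 hi
      unfold thr
      have : ¬ i < j := by omega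
      have : i ≠ j := by omega
      simp [*]
    have h3 : ∑ i ∈ Finset.range (j+1), D.s i * D.w i * D.thr j μ i
        = (∑ i ∈ Finset.range j, D.s i * D.w i) + D.s j * D.w j * ((μ - D.muk j) / D.w j) := by
      rw [Finset.sum_range_succ]
      congr 1
      · apply Finset.sum_congr rfl
        intro i hi
        have := Finset.mem_range.1 hi
        unfold thr; simp [this]
      · unfold thr; simp
    rw [← hsplit, h2, h3]
    have h4 : D.s j * D.w j * ((μ - D.muk j) / D.w j) = D.s j * (μ - D.muk j) := by
      field_simp
    have e1 := D.sum_w_mul_sub j (Finset.range j)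
    rw [h4, ck_succ_eq, e1]
    unfold muk; ring

lemma pStar_eq (j : ℕ) (hj : j < D.m) {μ : ℝ}
    (hμ1 : D.muk j < μ) (hμ2 : μ ≤ D.muk (j + 1)) (hμ0 : 0 < μ) (hμlt : μ < 1) :
    D.pStar μ = D.s j + D.ck (j + 1) / μ := by
  obtain ⟨hr, hsel, hpos⟩ := D.thr_spec j hj hμ1 hμ2
  set G := D.s j * μ + D.ck (j + 1) with hG
  have hπμ : D.pi * μ ≤ G := D.pi_mul_le_line hμ0.le hμlt.le j hj
  have h1μ : (0:ℝ) < 1 - μ := by linarith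
  have hval : D.ppv (D.thr j μ) = G / μ := by unfold ppv; rw [hsel, hpos]
  have hfor : D.forr (D.thr j μ) = (D.pi - G) / (1 - μ) := by
    unfold forr; rw [hsel, hpos]
  have hGμ : G / μ = D.s j + D.ck (j + 1) / μ := by
    rw [hG, add_div, mul_div_assoc, div_self (ne_of_gt hμ0), mul_one]
  have hmem : G / μ ∈ {p | ∃ q, D.FeasibleWith μ p q ∧ q ≤ D.pi ∧ D.pi ≤ p} := by
    refine ⟨(D.pi - G) / (1 - μ), ⟨hμ0, hμlt, D.thr j μ, hr, hsel, hval, hfor⟩, ?_, ?_⟩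
    · rw [div_le_iff₀ h1μ]; nlinarith
    · rw [le_div_iff₀ hμ0]; nlinarith
  have hub : ∀ p ∈ {p | ∃ q, D.FeasibleWith μ p q ∧ q ≤ D.pi ∧ D.pi ≤ p}, p ≤ G / μ := by
    rintro p ⟨q, ⟨_, _, t, ht, hrate, hppv, _⟩, _, _⟩
    rw [← hppv]
    unfold ppv
    rw [hrate]
    have := D.posSel_le ht j hj
    rw [hrate] at this
    exact (div_le_div_iff_of_pos_right hμ0).2 this
  have hg : IsGreatest {p | ∃ q, D.FeasibleWith μ p q ∧ q ≤ D.pi ∧ D.pi ≤ p} (G / μ) :=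
    ⟨hmem, hub⟩
  rw [hGμ] at hg
  exact hg.csSup_eq

lemma qStar_eq (j : ℕ) (hj : j < D.m) {μ : ℝ}
    (hμ1 : D.muk j < μ) (hμ2 : μ ≤ D.muk (j + 1)) (hμ0 : 0 < μ) (hμlt : μ < 1) :
    D.qStar μ = (D.pi - (D.s j * μ + D.ck (j + 1))) / (1 - μ) := by
  obtain ⟨hr, hsel, hpos⟩ := D.thr_spec j hj hμ1 hμ2
  set G := D.s j * μ + D.ck (j + 1) with hG
  have hπμ : D.pi * μ ≤ G := D.pi_mul_le_line hμ0.le hμlt.le j hj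
  have h1μ : (0:ℝ) < 1 - μ := by linarith
  have hval : D.ppv (D.thr j μ) = G / μ := by unfold ppv; rw [hsel, hpos]
  have hfor : D.forr (D.thr j μ) = (D.pi - G) / (1 - μ) := by
    unfold forr; rw [hsel, hpos]
  have hmem : (D.pi - G) / (1 - μ)
      ∈ {q | ∃ p, D.FeasibleWith μ p q ∧ q ≤ D.pi ∧ D.pi ≤ p} := by
    refine ⟨G / μ, ⟨hμ0, hμlt, D.thr j μ, hr, hsel, hval, hfor⟩, ?_, ?_⟩
    · rw [div_le_iff₀ h1μ]; nlinarith
    · rw [le_div_iff₀ hμ0]; nlinarith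
  have hlb : ∀ q ∈ {q | ∃ p, D.FeasibleWith μ p q ∧ q ≤ D.pi ∧ D.pi ≤ p},
      (D.pi - G) / (1 - μ) ≤ q := by
    rintro q ⟨p, ⟨_, _, t, ht, hrate, _, hforr⟩, _, _⟩
    rw [← hforr]
    unfold forr
    rw [hrate]
    have := D.posSel_le ht j hj
    rw [hrate] at this
    exact (div_le_div_iff_of_pos_right h1μ).2 (by linarith)
  exact IsLeast.csInf_eq ⟨hmem, hlb⟩

end CalibScore

namespace CalibScore
variable (D : CalibScore)

lemma pkF_one : D.pkF 1 = D.s 0 := by simp [pkF, ck_one]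

lemma pkF_succ (j : ℕ) : D.pkF (j + 1) = D.s j + D.ck (j + 1) / D.muk (j + 1) := by
  simp [pkF]

lemma pkF_m : D.pkF D.m = D.pi := by
  unfold pkF
  rw [muk_m, div_one, ← pi_eq_top]

lemma pkF_alt (i : ℕ) (h : i + 2 ≤ D.m) :
    D.pkF (i + 1) = D.s (i + 1) + D.ck (i + 2) / D.muk (i + 1) := by
  rw [pkF_succ, ck_succ_succ]
  have hμ : 0 < D.muk (i + 1) := D.muk_pos (by omega) (by omega)
  field_simp
  ring

lemma pkF_succ_lt {k : ℕ} (hk1 : 1 ≤ k) (hk : k + 1 ≤ D.m) : D.pkF (k + 1) < D.pkF k := by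
  obtain ⟨i, rfl⟩ : ∃ i, k = i + 1 := ⟨k - 1, by omega⟩
  rw [D.pkF_alt i (by omega), D.pkF_succ (i + 1)]
  have hc : 0 < D.ck (i + 2) := D.ck_pos (by omega) (by omega)
  have h1 : 0 < D.muk (i + 1) := D.muk_pos (by omega) (by omega)
  have h2 : D.muk (i + 1) < D.muk (i + 2) := D.muk_lt (by omega) (by omega)
  have := div_lt_div_of_pos_left hc h1 h2
  linarith

lemma pkF_le_pkF {a b : ℕ} (ha : 1 ≤ a) (hab : a ≤ b) (hb : b ≤ D.m) :
    D.pkF b ≤ D.pkF a := by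
  induction b, hab using Nat.le_induction with
  | base => exact le_rfl
  | succ n hn ih =>
    have h1 := ih (by omega)
    have h2 := D.pkF_succ_lt (by omega : 1 ≤ n) hb
    linarith

lemma pkF_lt_pkF {a b : ℕ} (ha : 1 ≤ a) (hab : a < b) (hb : b ≤ D.m) :
    D.pkF b < D.pkF a := by
  have h1 := D.pkF_le_pkF (by omega : 1 ≤ a + 1) hab hb
  have h2 := D.pkF_succ_lt ha (by omega)
  linarith

lemma pi_lt_pkF {k : ℕ} (hk1 : 1 ≤ k) (hk : k < D.m) : D.pi < D.pkF k := by
  have := D.pkF_lt_pkF hk1 hk le_rfl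
  rwa [pkF_m] at this

lemma pkF_le_s0 {k : ℕ} (hk1 : 1 ≤ k) (hk : k ≤ D.m) : D.pkF k ≤ D.s 0 := by
  have := D.pkF_le_pkF le_rfl hk1 hk
  rwa [pkF_one] at this

lemma line_lt_pkF (j : ℕ) (hj1 : 1 ≤ j) (hj : j + 1 ≤ D.m - 1) :
    D.s j + D.ck (j + 1) < D.pkF (j + 1) := by
  rw [pkF_succ]
  have hc : 0 < D.ck (j + 1) := D.ck_pos (by omega) (by omega)
  have hμ0 : 0 < D.muk (j + 1) := D.muk_pos (by omega) (by omega)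
  have hμ1 : D.muk (j + 1) < 1 := D.muk_lt_one (by omega)
  have : D.ck (j + 1) < D.ck (j + 1) / D.muk (j + 1) := by
    rw [lt_div_iff₀ hμ0]; nlinarith
  linarith

lemma qf_alg (P S c μ : ℝ) (hc : c ≠ 0) (hμ : μ ≠ 0) (h1 : μ ≠ 1) :
    ((P - c) * (S + c / μ) - S * P) / ((S + c / μ) - S - c)
      = (P - (S * μ + c)) / (1 - μ) := by
  have h1' : (1:ℝ) - μ ≠ 0 := sub_ne_zero.2 (Ne.symm h1)
  have hd : (S + c / μ) - S - c = c * (1 - μ) / μ := by field_simp; ring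
  rw [hd, div_eq_div_iff (div_ne_zero (mul_ne_zero hc h1') hμ) h1']
  field_simp
  ring

lemma qF_eval (j : ℕ) {μ : ℝ} (hc : D.ck (j + 1) ≠ 0) (hμ : μ ≠ 0) (h1 : μ ≠ 1) :
    D.qF (j + 1) (D.s j + D.ck (j + 1) / μ)
      = (D.pi - (D.s j * μ + D.ck (j + 1))) / (1 - μ) := by
  unfold qF
  simp only [Nat.add_sub_cancel]
  exact qf_alg D.pi (D.s j) (D.ck (j + 1)) μ hc hμ h1

lemma qF_m_eval (p : ℝ) (hp : p ≠ D.pi) : D.qF D.m p = D.s (D.m - 1) := by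
  have h := D.pi_eq_top
  unfold qF
  have h1 : D.pi - D.ck D.m = D.s (D.m - 1) := by linarith
  have h2 : p - D.s (D.m - 1) - D.ck D.m = p - D.pi := by linarith
  rw [h1, h2, show D.s (D.m - 1) * p - D.s (D.m - 1) * D.pi
      = D.s (D.m - 1) * (p - D.pi) from by ring,
    mul_div_assoc, div_self (sub_ne_zero.2 hp), mul_one]

/-- index of the piece containing `p`. -/
noncomputable def kb (p : ℝ) : ℕ :=
  max 2 (Nat.findGreatest (fun j => p < D.pkF j) (D.m - 1) + 1)

/-- The boundary curve. -/
noncomputable def Qb (p : ℝ) : ℝ :=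
  if p ≤ D.pi then D.s (D.m - 1) else D.qF (D.kb p) p

lemma kb_eq {k : ℕ} (hk2 : 2 ≤ k) (hkm : k ≤ D.m) {p : ℝ} (hp1 : D.pkF k ≤ p)
    (hp2 : p < D.pkF (k - 1)) : D.kb p = k := by
  unfold kb
  have h : Nat.findGreatest (fun j => p < D.pkF j) (D.m - 1) = k - 1 := by
    rw [Nat.findGreatest_eq_iff]
    refine ⟨by omega, fun _ => hp2, ?_⟩
    intro n hn hnm
    simp only [not_lt]
    exact le_trans (D.pkF_le_pkF (by omega) (by omega : k ≤ n) (by omega)) hp1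
  rw [h, show k - 1 + 1 = k from by omega]
  exact max_eq_right hk2

lemma kb_top {p : ℝ} (hp : D.s 0 ≤ p) : D.kb p = 2 := by
  unfold kb
  have h : Nat.findGreatest (fun j => p < D.pkF j) (D.m - 1) = 0 := by
    rw [Nat.findGreatest_eq_zero_iff]
    intro n hn hnm
    simp only [not_lt]
    exact le_trans (D.pkF_le_s0 hn (by omega)) hp
  rw [h]
  omega

lemma exists_piece {p : ℝ} (hp1 : D.pi < p) (hp2 : p < D.s 0) :
    2 ≤ D.kb p ∧ D.kb p ≤ D.m ∧ D.pkF (D.kb p) ≤ p ∧ p < D.pkF (D.kb p - 1) := by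
  classical
  set P : ℕ → Prop := fun j => p < D.pkF j with hP
  have hm2 : 2 ≤ D.m := D.one_lt_m
  have hP1 : P 1 := by rw [hP]; simpa [pkF_one] using hp2
  set n := Nat.findGreatest P (D.m - 1) with hn
  have hn1 : 1 ≤ n := Nat.le_findGreatest (by omega) hP1
  have hnm : n ≤ D.m - 1 := Nat.findGreatest_le _
  have hPn : P n := Nat.findGreatest_spec (P := P) (by omega : 1 ≤ D.m - 1) hP1
  have hnot : ¬ p < D.pkF (n + 1) := by
    rcases Nat.lt_or_ge n (D.m - 1) with h | h
    · exact Nat.findGreatest_is_greatest (k := n + 1) (n := D.m - 1)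
        (by rw [← hn]; omega) (by omega)
    · have : n = D.m - 1 := by omega
      rw [this, show D.m - 1 + 1 = D.m from by omega, pkF_m]
      exact not_lt.2 hp1.le
  have hkb : D.kb p = n + 1 := by
    unfold kb
    rw [← hn, max_eq_right (by omega)]
  rw [hkb]
  exact ⟨by omega, by omega, not_lt.1 hnot, by simpa using hPn⟩

end CalibScore

lemma continuousOn_union_of_closed {f : ℝ → ℝ} {s t : Set ℝ} (hs : IsClosed s)
    (ht : IsClosed t) (h1 : ContinuousOn f s) (h2 : ContinuousOn f t) :
    ContinuousOn f (s ∪ t) := by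
  intro x hx
  have hs' : ContinuousWithinAt f s x := by
    by_cases h : x ∈ s
    · exact h1 x h
    · exact continuousWithinAt_of_notMem_closure (by rwa [hs.closure_eq])
  have ht' : ContinuousWithinAt f t x := by
    by_cases h : x ∈ t
    · exact h2 x h
    · exact continuousWithinAt_of_notMem_closure (by rwa [ht.closure_eq])
  exact hs'.union ht'

namespace CalibScore
variable (D : CalibScore)

lemma Qb_eq_qF {k : ℕ} (hk2 : 2 ≤ k) (hkm : k ≤ D.m) {p : ℝ}
    (hp1 : D.pkF k ≤ p) (hp2 : p < D.pkF (k - 1)) (hpi : D.pi < p) :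
    D.Qb p = D.qF k p := by
  unfold Qb
  rw [if_neg (not_le.2 hpi), D.kb_eq hk2 hkm hp1 hp2]

lemma qF_match {j : ℕ} (hj1 : 1 ≤ j) (hj : j + 2 ≤ D.m) :
    D.qF (j + 1) (D.pkF (j + 1)) = D.qF (j + 2) (D.pkF (j + 1)) := by
  have hμ0 : 0 < D.muk (j + 1) := D.muk_pos (by omega) (by omega)
  have hμ1 : D.muk (j + 1) < 1 := D.muk_lt_one (by omega)
  have hc : D.ck (j + 1) ≠ 0 := (D.ck_pos (by omega) (by omega)).ne'
  have hc2 : D.ck (j + 2) ≠ 0 := (D.ck_pos (by omega) (by omega)).ne'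
  have L : D.qF (j + 1) (D.pkF (j + 1))
      = (D.pi - (D.s j * D.muk (j + 1) + D.ck (j + 1))) / (1 - D.muk (j + 1)) := by
    rw [D.pkF_succ j]
    exact D.qF_eval j hc hμ0.ne' hμ1.ne
  have R : D.qF (j + 2) (D.pkF (j + 1))
      = (D.pi - (D.s (j + 1) * D.muk (j + 1) + D.ck (j + 2))) / (1 - D.muk (j + 1)) := by
    rw [D.pkF_alt j hj]
    exact D.qF_eval (j + 1) hc2 hμ0.ne' hμ1.ne
  rw [L, R]
  congr 1
  rw [ck_succ_succ]
  ring

lemma Qb_pi : D.Qb D.pi = D.s (D.m - 1) := by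
  unfold Qb; rw [if_pos le_rfl]

lemma Qb_eq_const {p : ℝ} (hp1 : D.pi ≤ p) (hp2 : p ≤ D.pkF (D.m - 1)) :
    D.Qb p = D.s (D.m - 1) := by
  have hm2 : 2 ≤ D.m := D.one_lt_m
  rcases eq_or_lt_of_le hp1 with h | h
  · unfold Qb; rw [if_pos h.symm.le]
  · rcases lt_or_eq_of_le hp2 with h2 | h2
    · have e : D.Qb p = D.qF D.m p :=
        D.Qb_eq_qF (k := D.m) hm2 le_rfl (by rw [pkF_m]; exact h.le) h2 h
      rw [e, D.qF_m_eval p (ne_of_gt h)]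
    · by_cases hm : D.m = 2
      · have hs0 : p = D.s 0 := by rw [h2, hm]; exact D.pkF_one
        unfold Qb
        rw [if_neg (not_le.2 h), D.kb_top hs0.ge, ← hm, D.qF_m_eval p (ne_of_gt h)]
      · -- m ≥ 3, p = pkF (m-1): kb p = m - 1
        obtain ⟨j, hj⟩ : ∃ j, D.m = j + 2 := ⟨D.m - 2, by omega⟩
        have hj1 : 1 ≤ j := by omega
        have hm1 : D.m - 1 = j + 1 := by omega
        have hm2' : D.m - 2 = j := by omega
        have hlt : D.pkF (j + 1) < D.pkF j := D.pkF_succ_lt (by omega) (by omega)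
        have e : D.Qb p = D.qF (j + 1) p := by
          apply D.Qb_eq_qF (k := j + 1) (by omega) (by omega)
          · rw [h2, hm1]
          · rw [h2, hm1]; exact hlt
          · exact h
        rw [e, h2, hm1, D.qF_match hj1 (by omega), ← hj,
          D.qF_m_eval _ (ne_of_gt (by rw [← hm1, ← h2]; exact h)), hm1, ← hm1]

lemma qF_denom_pos {k : ℕ} (hk2 : 2 ≤ k) (hkm : k ≤ D.m - 1) {p : ℝ}
    (hp : D.pkF k ≤ p) : 0 < p - D.s (k - 1) - D.ck k := by
  obtain ⟨j, rfl⟩ : ∃ j, k = j + 1 := ⟨k - 1, by omega⟩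
  have := D.line_lt_pkF j (by omega) (by omega)
  simp only [Nat.add_sub_cancel]
  linarith

lemma qF_mono {k : ℕ} (hk2 : 2 ≤ k) (hkm : k ≤ D.m - 1) {x y : ℝ}
    (hx : D.pkF k ≤ x) (hxy : x ≤ y) : D.qF k x ≤ D.qF k y := by
  have dx := D.qF_denom_pos hk2 hkm hx
  have dy := D.qF_denom_pos hk2 hkm (le_trans hx hxy)
  unfold qF
  rw [div_le_div_iff₀ dx dy]
  have hc : 0 ≤ D.ck k := D.ck_nonneg (by omega) (by omega)
  have hd := D.pi_le_line (k - 1) (by omega)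
  rw [show k - 1 + 1 = k from by omega] at hd
  nlinarith [mul_nonneg (mul_nonneg hc
    (by linarith : (0:ℝ) ≤ D.s (k - 1) + D.ck k - D.pi))
    (by linarith : (0:ℝ) ≤ y - x)]

lemma qF_contOn (k : ℕ) (hk2 : 2 ≤ k) (hkm : k ≤ D.m - 1) :
    ContinuousOn (D.qF k) (Set.Ici (D.pkF k)) := by
  have h1 : Continuous fun p : ℝ => (D.pi - D.ck k) * p - D.s (k - 1) * D.pi := by
    continuity
  have h2 : Continuous fun p : ℝ => p - D.s (k - 1) - D.ck k := by continuity
  intro x hx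
  exact ((h1.continuousAt.div h2.continuousAt
    (ne_of_gt (D.qF_denom_pos hk2 hkm hx)))).continuousWithinAt

lemma Qb_piece (k : ℕ) (hk2 : 2 ≤ k) (hkm : k ≤ D.m) :
    MonotoneOn D.Qb (Set.Icc (D.pkF k) (D.pkF (k - 1))) ∧
    ContinuousOn D.Qb (Set.Icc (D.pkF k) (D.pkF (k - 1))) := by
  rcases lt_or_eq_of_le hkm with hlt | heq
  · have heq : Set.EqOn D.Qb (D.qF k) (Set.Icc (D.pkF k) (D.pkF (k - 1))) := by
      intro p hp
      rcases lt_or_eq_of_le hp.2 with h2 | h2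
      · exact D.Qb_eq_qF hk2 hlt.le hp.1 h2
          (lt_of_lt_of_le (D.pi_lt_pkF (by omega) hlt) hp.1)
      · -- right endpoint
        rcases eq_or_lt_of_le hk2 with hk2' | hk2'
        · -- k = 2 : p = pkF 1 = s 0
          have hs0 : p = D.s 0 := by rw [h2, ← hk2']; exact D.pkF_one
          unfold Qb
          rw [if_neg (not_le.2 (lt_of_lt_of_le D.pi_lt_s0 hs0.ge)), D.kb_top hs0.ge, ← hk2']
        · -- k ≥ 3
          obtain ⟨j, rfl⟩ : ∃ j, k = j + 2 := ⟨k - 2, by omega⟩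
          have hj1 : 1 ≤ j := by omega
          have hlt2 : D.pkF (j + 1) < D.pkF j := D.pkF_succ_lt (by omega) (by omega)
          have e : D.Qb p = D.qF (j + 1) p := by
            apply D.Qb_eq_qF (k := j + 1) (by omega) (by omega)
            · rw [h2]; exact le_rfl
            · rw [h2]; exact hlt2
            · exact lt_of_lt_of_le (D.pi_lt_pkF (k := j + 1) (by omega) (by omega))
                (le_of_eq h2.symm)
          rw [e, h2]
          exact D.qF_match hj1 (by omega)
    refine ⟨?_, ?_⟩
    · intro x hx y hy hxy
      rw [heq hx, heq hy]
      exact D.qF_mono hk2 (by omega) hx.1 hxy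
    · exact ContinuousOn.congr ((D.qF_contOn k hk2 (by omega)).mono
        (Set.Icc_subset_Ici_self)) heq
  · subst heq
    have heqc : Set.EqOn D.Qb (fun _ => D.s (D.m - 1))
        (Set.Icc (D.pkF D.m) (D.pkF (D.m - 1))) := by
      intro p hp
      exact D.Qb_eq_const (by rw [← pkF_m]; exact hp.1) hp.2
    refine ⟨?_, ?_⟩
    · intro x hx y hy _
      rw [heqc hx, heqc hy]
    · exact ContinuousOn.congr continuousOn_const heqc

lemma Qb_glue (k : ℕ) (hk2 : 2 ≤ k) : k ≤ D.m →
    MonotoneOn D.Qb (Set.Icc (D.pkF k) (D.pkF 1)) ∧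
    ContinuousOn D.Qb (Set.Icc (D.pkF k) (D.pkF 1)) := by
  induction k, hk2 using Nat.le_induction with
  | base =>
    intro h2m
    exact D.Qb_piece 2 le_rfl h2m
  | succ n hn ih =>
    intro hnm
    have h1 := ih (by omega)
    have h2 := D.Qb_piece (n + 1) (by omega) hnm
    simp only [Nat.add_sub_cancel] at h2
    have hord1 : D.pkF (n + 1) ≤ D.pkF n := (D.pkF_succ_lt (by omega) hnm).le
    have hord2 : D.pkF n ≤ D.pkF 1 := D.pkF_le_pkF le_rfl (by omega) (by omega)
    constructor
    · intro x hx y hy hxy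
      simp only [Set.mem_Icc] at hx hy
      rcases le_total x (D.pkF n) with hxn | hxn
      · rcases le_total y (D.pkF n) with hyn | hyn
        · exact h2.1 ⟨hx.1, hxn⟩ ⟨hy.1, hyn⟩ hxy
        · calc D.Qb x ≤ D.Qb (D.pkF n) := h2.1 ⟨hx.1, hxn⟩ ⟨hord1, le_rfl⟩ hxn
            _ ≤ D.Qb y := h1.1 ⟨le_rfl, hord2⟩ ⟨hyn, hy.2⟩ hyn
      · rcases le_total y (D.pkF n) with hyn | hyn
        · have hxy' : x = y := le_antisymm hxy (by linarith)
          rw [hxy']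
        · exact h1.1 ⟨hxn, hx.2⟩ ⟨hyn, hy.2⟩ hxy
    · rw [← Set.Icc_union_Icc_eq_Icc hord1 hord2]
      exact continuousOn_union_of_closed isClosed_Icc isClosed_Icc h2.2 h1.2

lemma Qb_mono : MonotoneOn D.Qb (Set.Icc D.pi (D.s 0)) := by
  have := (D.Qb_glue D.m D.one_lt_m le_rfl).1
  rwa [pkF_m, pkF_one] at this

lemma Qb_cont : ContinuousOn D.Qb (Set.Icc D.pi (D.s 0)) := by
  have := (D.Qb_glue D.m D.one_lt_m le_rfl).2
  rwa [pkF_m, pkF_one] at this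

end CalibScore

namespace CalibScore
variable (D : CalibScore)

lemma w0_lt_one : D.w 0 < 1 := by
  have := D.muk_lt_one D.one_lt_m
  rwa [muk_one] at this

lemma w0_pos : 0 < D.w 0 := D.w_pos 0 D.m_pos

lemma exists_interval {μ : ℝ} (h0 : 0 < μ) (h1 : μ < 1) :
    ∃ j, j < D.m ∧ D.muk j < μ ∧ μ ≤ D.muk (j + 1) := by
  classical
  have hPm : μ ≤ D.muk D.m := by rw [muk_m]; exact h1.le
  have hex : ∃ k, μ ≤ D.muk k := ⟨D.m, hPm⟩
  have hspec : μ ≤ D.muk (Nat.find hex) := Nat.find_spec hex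
  have hkm : Nat.find hex ≤ D.m := Nat.find_min' hex hPm
  have hk1 : 1 ≤ Nat.find hex := by
    rcases Nat.eq_zero_or_pos (Nat.find hex) with h | h
    · exfalso; rw [h, muk_zero] at hspec; linarith
    · exact h
  obtain ⟨j, hkj⟩ : ∃ j, Nat.find hex = j + 1 := ⟨Nat.find hex - 1, by omega⟩
  refine ⟨j, by omega, ?_, by rw [hkj] at hspec; exact hspec⟩
  have hmin := Nat.find_min hex (m := j) (by omega)
  push_neg at hmin
  exact hmin

lemma boundary_pt {j : ℕ} (hj1 : 1 ≤ j) (hj : j < D.m) {μ : ℝ}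
    (hμ1 : D.muk j < μ) (hμ2 : μ ≤ D.muk (j + 1)) (hμ0 : 0 < μ) (hμlt : μ < 1) :
    D.pi < D.pStar μ ∧ D.pStar μ < D.s 0 ∧ D.pkF (j + 1) ≤ D.pStar μ ∧
      D.pStar μ < D.pkF j ∧ D.qF (j + 1) (D.pStar μ) = D.qStar μ ∧
      D.Qb (D.pStar μ) = D.qStar μ := by
  have hP := D.pStar_eq j hj hμ1 hμ2 hμ0 hμlt
  have hQ := D.qStar_eq j hj hμ1 hμ2 hμ0 hμlt
  have hc : 0 < D.ck (j + 1) := D.ck_pos (by omega) (by omega)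
  have hμj2 : 0 < D.muk (j + 1) := D.muk_pos (by omega) (by omega)
  have hμj : 0 < D.muk j := D.muk_pos hj1 (by omega)
  have h1 : D.ck (j + 1) / D.muk (j + 1) ≤ D.ck (j + 1) / μ :=
    (div_le_div_iff_of_pos_left hc hμj2 hμ0).2 hμ2
  have h2 : D.ck (j + 1) / μ < D.ck (j + 1) / D.muk j :=
    (div_lt_div_iff_of_pos_left hc hμ0 hμj).2 hμ1
  have hpkalt : D.pkF j = D.s j + D.ck (j + 1) / D.muk j := by
    obtain ⟨i, rfl⟩ : ∃ i, j = i + 1 := ⟨j - 1, by omega⟩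
    exact D.pkF_alt i (by omega)
  have hcc : D.ck (j + 1) < D.ck (j + 1) / μ := by
    rw [lt_div_iff₀ hμ0]; nlinarith
  have hπ : D.pi < D.pStar μ := by
    have := D.pi_le_line j hj
    rw [hP]; linarith
  have hps0 : D.pStar μ < D.s 0 := by
    have hle : D.pkF j ≤ D.s 0 := D.pkF_le_s0 hj1 (by omega)
    rw [hP]; rw [hpkalt] at hle; linarith
  have hub : D.pkF (j + 1) ≤ D.pStar μ := by rw [hP, pkF_succ]; linarith
  have hlb : D.pStar μ < D.pkF j := by rw [hP, hpkalt]; linarith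
  have hqf : D.qF (j + 1) (D.pStar μ) = D.qStar μ := by
    rw [hP, D.qF_eval j hc.ne' hμ0.ne' hμlt.ne, hQ]
  refine ⟨hπ, hps0, hub, hlb, hqf, ?_⟩
  rw [D.Qb_eq_qF (k := j + 1) (by omega) (by omega) hub hlb hπ]
  exact hqf

lemma piece1_pt {μ : ℝ} (hμ0 : 0 < μ) (hμ2 : μ ≤ D.w 0) :
    D.pStar μ = D.s 0 ∧ D.qStar μ = (D.pi - D.s 0 * μ) / (1 - μ) := by
  have hμlt : μ < 1 := lt_of_le_of_lt hμ2 D.w0_lt_one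
  have hμ1 : D.muk 0 < μ := by rw [muk_zero]; exact hμ0
  have hμ2' : μ ≤ D.muk 1 := by rwa [muk_one]
  have hP := D.pStar_eq 0 D.m_pos hμ1 hμ2' hμ0 hμlt
  have hQ := D.qStar_eq 0 D.m_pos hμ1 hμ2' hμ0 hμlt
  rw [ck_one] at hP hQ
  constructor
  · rw [hP, zero_div, add_zero]
  · rw [hQ, add_zero]

lemma piece1_range {μ : ℝ} (hμ0 : 0 < μ) (hμ2 : μ ≤ D.w 0) :
    (D.pi - D.w 0 * D.s 0) / (1 - D.w 0) ≤ (D.pi - D.s 0 * μ) / (1 - μ) ∧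
      (D.pi - D.s 0 * μ) / (1 - μ) < D.pi := by
  have hw1 : D.w 0 < 1 := D.w0_lt_one
  have hμlt : μ < 1 := lt_of_le_of_lt hμ2 hw1
  have hπ : D.pi < D.s 0 := D.pi_lt_s0
  constructor
  · rw [div_le_div_iff₀ (by linarith) (by linarith)]
    nlinarith [mul_nonneg (sub_nonneg.2 hμ2) (sub_nonneg.2 hπ.le)]
  · rw [div_lt_iff₀ (by linarith)]
    nlinarith

lemma piece1_inv {q : ℝ} (hq1 : (D.pi - D.w 0 * D.s 0) / (1 - D.w 0) ≤ q)
    (hqπ : q < D.pi) :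
    ∃ μ, 0 < μ ∧ μ ≤ D.w 0 ∧ (D.pi - D.s 0 * μ) / (1 - μ) = q := by
  have hw1 : D.w 0 < 1 := D.w0_lt_one
  have hπ : D.pi < D.s 0 := D.pi_lt_s0
  have hs0q : 0 < D.s 0 - q := by linarith
  refine ⟨(D.pi - q) / (D.s 0 - q), div_pos (by linarith) hs0q, ?_, ?_⟩
  · rw [div_le_iff₀ hs0q]
    have := (div_le_iff₀ (by linarith : (0:ℝ) < 1 - D.w 0)).1 hq1
    nlinarith
  · have hμlt : (D.pi - q) / (D.s 0 - q) < 1 := by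
      rw [div_lt_one hs0q]; linarith
    rw [div_eq_iff (by linarith : (1:ℝ) - (D.pi - q) / (D.s 0 - q) ≠ 0)]
    field_simp
    ring

lemma inv_piece {j : ℕ} (hj1 : 1 ≤ j) (hj : j < D.m) {p : ℝ}
    (hp1 : D.pkF (j + 1) ≤ p) (hp2 : p < D.pkF j) (hpπ : D.pi < p) :
    ∃ μ, 0 < μ ∧ μ < 1 ∧ D.pStar μ = p ∧ D.qStar μ = D.Qb p := by
  have hc : 0 < D.ck (j + 1) := D.ck_pos (by omega) (by omega)
  have hμj2 : 0 < D.muk (j + 1) := D.muk_pos (by omega) (by omega)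
  have hμj : 0 < D.muk j := D.muk_pos hj1 (by omega)
  have hpkalt : D.pkF j = D.s j + D.ck (j + 1) / D.muk j := by
    obtain ⟨i, rfl⟩ : ∃ i, j = i + 1 := ⟨j - 1, by omega⟩
    exact D.pkF_alt i (by omega)
  have hps : 0 < p - D.s j := by
    have h := D.pkF_succ j
    have : 0 < D.ck (j + 1) / D.muk (j + 1) := div_pos hc hμj2
    rw [h] at hp1; linarith
  set μ := D.ck (j + 1) / (p - D.s j) with hμdef
  have hμ0 : 0 < μ := div_pos hc hps
  have hμ2 : μ ≤ D.muk (j + 1) := by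
    rw [hμdef, div_le_iff₀ hps]
    rw [pkF_succ] at hp1
    have h1 : D.ck (j + 1) / D.muk (j + 1) ≤ p - D.s j := by linarith
    rw [div_le_iff₀ hμj2] at h1
    nlinarith
  have hμ1 : D.muk j < μ := by
    rw [hμdef, lt_div_iff₀ hps]
    rw [hpkalt] at hp2
    have h1 : p - D.s j < D.ck (j + 1) / D.muk j := by linarith
    rw [lt_div_iff₀ hμj] at h1
    nlinarith
  have hsc : D.s j + D.ck (j + 1) < p := by
    rcases lt_or_eq_of_le (by omega : j + 1 ≤ D.m) with h | h
    · have := D.line_lt_pkF j hj1 (by omega)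
      linarith
    · have := D.pi_eq_top
      have hj' : D.m - 1 = j := by omega
      rw [hj', ← h] at this
      linarith
  have hμlt : μ < 1 := by
    rw [hμdef, div_lt_one hps]; linarith
  have hval : D.s j + D.ck (j + 1) / μ = p := by
    rw [hμdef]
    field_simp
    ring
  have hP := D.pStar_eq j hj hμ1 hμ2 hμ0 hμlt
  have hQ := D.qStar_eq j hj hμ1 hμ2 hμ0 hμlt
  refine ⟨μ, hμ0, hμlt, by rw [hP, hval], ?_⟩
  have hqf : D.qF (j + 1) p = D.qStar μ := by
    rw [← hval, D.qF_eval j hc.ne' hμ0.ne' hμlt.ne, hQ]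
  rw [D.Qb_eq_qF (k := j + 1) (by omega) (by omega) hp1 hp2 hpπ]
  exact hqf.symm

lemma Qb_s0 : D.Qb (D.s 0) = (D.pi - D.w 0 * D.s 0) / (1 - D.w 0) := by
  have hw1 : D.w 0 < 1 := D.w0_lt_one
  have hs01 : D.s 1 < D.s 0 := D.s_desc 0 1 one_pos D.one_lt_m
  have e : D.Qb (D.s 0) = D.qF 2 (D.s 0) := by
    unfold Qb
    rw [if_neg (not_le.2 D.pi_lt_s0), D.kb_top le_rfl]
  rw [e]
  have hck2 : D.ck 2 = D.w 0 * (D.s 0 - D.s 1) := by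
    simp [ck, Finset.sum_range_one]
  unfold qF
  rw [show (2:ℕ) - 1 = 1 from rfl, hck2]
  rw [div_eq_div_iff (by nlinarith) (by linarith)]
  ring

end CalibScore

/-- The closure of the nontrivial boundary of the feasible region
`C` — the set of points `(p*(μ), q*(μ))` for `μ ∈ (0,1)` together with its limit
points — consists of a continuous nondecreasing curve `Q` on `[π, s_1)`, equal on each
interval `J_k = p*(I_k)` (for `1 < k ≤ m`) to
`p ↦ ((π − c_k) p − s_k π)/(p − s_k − c_k)`, together with the vertical segment
`{s_1} × [q_1, π]`, where `q_1 = (π − P(S = s_1) s_1)/(1 − P(S = s_1))`. -/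
theorem stmt2 (D : CalibScore) :
    ∃ Q : ℝ → ℝ,
      ContinuousOn Q (Set.Ico D.pi (D.s 0)) ∧
      MonotoneOn Q (Set.Ico D.pi (D.s 0)) ∧
      (∀ k, 1 < k → k ≤ D.m → Set.EqOn Q (D.qF k) (D.pStar '' D.Ik k)) ∧
      closure {x : ℝ × ℝ | ∃ μ, μ ∈ Set.Ioo (0 : ℝ) 1 ∧ x = (D.pStar μ, D.qStar μ)} =
        ((fun p => (p, Q p)) '' Set.Ico D.pi (D.s 0)) ∪
          (({D.s 0} : Set ℝ) ×ˢ
            Set.Icc ((D.pi - D.w 0 * D.s 0) / (1 - D.w 0)) D.pi) := by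
  
  classical
  have hm2 : 2 ≤ D.m := D.one_lt_m
  have hπs0 : D.pi < D.s 0 := D.pi_lt_s0
  have hw1 : D.w 0 < 1 := D.w0_lt_one
  have hq1π : (D.pi - D.w 0 * D.s 0) / (1 - D.w 0) < D.pi := by
    rw [div_lt_iff₀ (by linarith)]
    nlinarith [D.w0_pos]
  refine ⟨D.Qb, D.Qb_cont.mono Set.Ico_subset_Icc_self,
    D.Qb_mono.mono Set.Ico_subset_Icc_self, ?_, ?_⟩
  · rintro k hk1 hkm x ⟨μ, hμIk, rfl⟩
    obtain ⟨⟨hμ1, hμ2⟩, hμ0, hμlt⟩ := hμIk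
    obtain ⟨j, rfl⟩ : ∃ j, k = j + 1 := ⟨k - 1, by omega⟩
    obtain ⟨_, _, _, _, hqf, hqb⟩ :=
      D.boundary_pt (by omega : 1 ≤ j) (by omega : j < D.m) hμ1 hμ2 hμ0 hμlt
    rw [hqb, ← hqf]
  · set B := {x : ℝ × ℝ | ∃ μ, μ ∈ Set.Ioo (0 : ℝ) 1 ∧ x = (D.pStar μ, D.qStar μ)}
      with hBdef
    set Gr := (fun p => (p, D.Qb p)) '' Set.Ico D.pi (D.s 0) with hGrdef
    set V := (({D.s 0} : Set ℝ) ×ˢ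
      Set.Icc ((D.pi - D.w 0 * D.s 0) / (1 - D.w 0)) D.pi) with hVdef
    set K := (fun p => (p, D.Qb p)) '' Set.Icc D.pi (D.s 0) with hKdef
    have hVclosed : IsClosed V := isClosed_singleton.prod isClosed_Icc
    have hKclosed : IsClosed K :=
      (isCompact_Icc.image_of_continuousOn (continuousOn_id.prodMk D.Qb_cont)).isClosed
    apply Set.Subset.antisymm
    · -- closure B ⊆ Gr ∪ V
      have hBsub : B ⊆ K ∪ V := by
        rintro x ⟨μ, ⟨hμ0, hμlt⟩, rfl⟩
        obtain ⟨j, hjm, hμ1, hμ2⟩ := D.exists_interval hμ0 hμlt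
        rcases Nat.eq_zero_or_pos j with hj0 | hj1
        · subst hj0
          rw [D.muk_one] at hμ2
          rw [D.muk_zero] at hμ1
          obtain ⟨hPs, hQs⟩ := D.piece1_pt hμ0 hμ2
          obtain ⟨hr1, hr2⟩ := D.piece1_range hμ0 hμ2
          right
          refine Set.mem_prod.2 ⟨by simp [hPs], ?_⟩
          simp only [Set.mem_Icc]
          rw [hQs]
          exact ⟨hr1, hr2.le⟩
        · left
          obtain ⟨hb1, hb2, _, _, _, hqb⟩ := D.boundary_pt hj1 hjm hμ1 hμ2 hμ0 hμlt
          exact ⟨D.pStar μ, ⟨hb1.le, hb2.le⟩, by dsimp only; rw [hqb]⟩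
      have hKV : K ∪ V ⊆ Gr ∪ V := by
        rintro x (⟨p, hp, rfl⟩ | hxV)
        · rcases lt_or_eq_of_le hp.2 with h | h
          · exact Or.inl ⟨p, ⟨hp.1, h⟩, rfl⟩
          · subst h
            right
            refine Set.mem_prod.2 ⟨rfl, ?_⟩
            show D.Qb (D.s 0) ∈ _
            rw [D.Qb_s0]
            exact ⟨le_rfl, hq1π.le⟩
        · exact Or.inr hxV
      exact (closure_minimal hBsub (hKclosed.union hVclosed)).trans hKV
    · -- Gr ∪ V ⊆ closure B
      rintro x (⟨p, hp, rfl⟩ | hxV)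
      · rcases eq_or_lt_of_le hp.1 with hpe | hpl
        · -- p = pi : limit point from the right
          have hc : D.pi < D.pkF (D.m - 1) := D.pi_lt_pkF (by omega) (by omega)
          have hsub : (fun t : ℝ => (t, D.s (D.m - 1))) ''
              Set.Ioo D.pi (D.pkF (D.m - 1)) ⊆ B := by
            rintro y ⟨t, ht, rfl⟩
            have hm1 : D.m - 1 + 1 = D.m := by omega
            have h1 : D.pkF (D.m - 1 + 1) ≤ t := by rw [hm1, D.pkF_m]; exact ht.1.le
            obtain ⟨μ, hμ0, hμlt, hP, hQ⟩ :=
              D.inv_piece (by omega : 1 ≤ D.m - 1) (by omega) h1 ht.2 ht.1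
            have hQc : D.Qb t = D.s (D.m - 1) := D.Qb_eq_const ht.1.le ht.2.le
            exact ⟨μ, ⟨hμ0, hμlt⟩, by dsimp only; rw [hP, hQ, hQc]⟩
          have hmem : ((D.pi, D.s (D.m - 1)) : ℝ × ℝ) ∈ closure
              ((fun t : ℝ => (t, D.s (D.m - 1))) '' Set.Ioo D.pi (D.pkF (D.m - 1))) := by
            apply ContinuousWithinAt.mem_closure_image
              (f := fun t : ℝ => (t, D.s (D.m - 1))) (x := D.pi)
            · exact (continuous_id.prodMk continuous_const).continuousWithinAt
            · rw [closure_Ioo (ne_of_lt hc)]; exact ⟨le_rfl, hc.le⟩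
          have hfinal := closure_mono hsub hmem
          have hpp : p = D.pi := hpe.symm
          subst hpp
          dsimp only
          rw [D.Qb_pi]
          exact hfinal
        · obtain ⟨hk2, hkm, hpk1, hpk2⟩ := D.exists_piece hpl hp.2
          obtain ⟨j, hj⟩ : ∃ j, D.kb p = j + 1 := ⟨D.kb p - 1, by omega⟩
          rw [hj] at hpk1 hpk2 hk2 hkm
          obtain ⟨μ, hμ0, hμlt, hP, hQ⟩ :=
            D.inv_piece (by omega) (by omega) hpk1 hpk2 hpl
          exact subset_closure ⟨μ, ⟨hμ0, hμlt⟩, by dsimp only; rw [hP, hQ]⟩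
      · obtain ⟨x1, x2⟩ := x
        obtain ⟨hx1, hx2⟩ := hxV
        have hx1' : x1 = D.s 0 := hx1
        subst hx1'
        rcases lt_or_eq_of_le hx2.2 with hql | hqe
        · obtain ⟨μ, hμ0, hμw, hval⟩ := D.piece1_inv hx2.1 hql
          obtain ⟨hPs, hQs⟩ := D.piece1_pt hμ0 hμw
          exact subset_closure ⟨μ, ⟨hμ0, lt_of_le_of_lt hμw hw1⟩,
            by rw [hPs, hQs, hval]⟩
        · have hsub : (fun t : ℝ => ((D.s 0 : ℝ), (D.pi - D.s 0 * t) / (1 - t))) ''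
              Set.Ioo 0 (D.w 0) ⊆ B := by
            rintro y ⟨t, ht, rfl⟩
            obtain ⟨hPs, hQs⟩ := D.piece1_pt ht.1 ht.2.le
            exact ⟨t, ⟨ht.1, lt_trans ht.2 hw1⟩, by dsimp only; rw [hPs, hQs]⟩
          have hg0 : ContinuousWithinAt
              (fun t : ℝ => ((D.s 0 : ℝ), (D.pi - D.s 0 * t) / (1 - t)))
              (Set.Ioo 0 (D.w 0)) 0 := by
            apply ContinuousAt.continuousWithinAt
            apply ContinuousAt.prodMk continuousAt_const
            apply ContinuousAt.div
            · fun_prop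
            · fun_prop
            · norm_num
          have hmem := hg0.mem_closure_image
            (by rw [closure_Ioo D.w0_pos.ne]; exact ⟨le_rfl, D.w0_pos.le⟩)
          have hfinal := closure_mono hsub hmem
          simp only [mul_zero, sub_zero, div_one] at hfinal
          subst hqe
          exact hfinal
end

section
/- Let R be a nonconstant classifier based on S with selection rate μ := P(R=1), p := PPV(R) and q := FOR(R), and for η ∈ [0,1] define the classifier R^η by the selection rule P(R^η=1 | S=s_i) = η·P(R=1 | S=s_i) + (1−η)·μ. Then P(R^η=1) = μ, PPV(R^η) = η p + (1−η) π, and FOR(R^η) = η q + (1−η) π. -/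
open Finset

/-- Let `R` be a nonconstant classifier based on `S`, given by the
selection rule `t` with selection rate `μ = P(R = 1)`, and for `η ∈ [0,1]` let `R^η`
be given by the selection rule `i ↦ η t i + (1 − η) μ` (the `η`-mixture of `R` with
an independent Bernoulli(`μ`)).  Then `P(R^η = 1) = μ`, `PPV(R^η) = η p + (1 − η) π`
and `FOR(R^η) = η q + (1 − η) π`, where `p = PPV(R)` and `q = FOR(R)`. -/
theorem stmt5 (D : CalibScore) (t : ℕ → ℝ) (ht : D.IsSelRule t)
    (hμ0 : 0 < D.selRate t) (hμ1 : D.selRate t < 1)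
    (η : ℝ) (hη : η ∈ Set.Icc (0 : ℝ) 1) :
    D.IsSelRule (fun i => η * t i + (1 - η) * D.selRate t) ∧
    D.selRate (fun i => η * t i + (1 - η) * D.selRate t) = D.selRate t ∧
    D.ppv (fun i => η * t i + (1 - η) * D.selRate t) = η * D.ppv t + (1 - η) * D.pi ∧
    D.forr (fun i => η * t i + (1 - η) * D.selRate t) = η * D.forr t + (1 - η) * D.pi := by
  obtain ⟨hη0, hη1⟩ := hη
  set μ := D.selRate t with hμ
  have hrule : D.IsSelRule (fun i => η * t i + (1 - η) * μ) := by
    intro i hi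
    obtain ⟨h0, h1⟩ := ht i hi
    constructor
    · show (0:ℝ) ≤ η * t i + (1 - η) * μ
      have := mul_nonneg (by linarith : (0:ℝ) ≤ 1 - η) hμ0.le
      nlinarith
    · show η * t i + (1 - η) * μ ≤ 1
      nlinarith [mul_nonneg (by linarith : (0:ℝ) ≤ 1 - η) (by linarith : (0:ℝ) ≤ 1 - μ)]
  have hsel : D.selRate (fun i => η * t i + (1 - η) * μ) = μ := by
    simp only [CalibScore.selRate, mul_add]
    rw [Finset.sum_add_distrib]
    have h1 : ∑ i ∈ Finset.range D.m, D.w i * (η * t i) = η * μ := by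
      rw [hμ, CalibScore.selRate, Finset.mul_sum]; apply Finset.sum_congr rfl; intros; ring
    have h2 : ∑ i ∈ Finset.range D.m, D.w i * ((1 - η) * μ) = (1 - η) * μ := by
      rw [← Finset.sum_mul, D.w_sum, one_mul]
    rw [h1, h2]; ring
  have hpos : D.posSel (fun i => η * t i + (1 - η) * μ)
      = η * D.posSel t + (1 - η) * μ * D.pi := by
    simp only [CalibScore.posSel, CalibScore.pi, mul_add]
    rw [Finset.sum_add_distrib]
    have h1 : ∑ i ∈ Finset.range D.m, D.s i * D.w i * (η * t i) = η * D.posSel t := by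
      rw [CalibScore.posSel, Finset.mul_sum]; apply Finset.sum_congr rfl; intros; ring
    have h2 : ∑ i ∈ Finset.range D.m, D.s i * D.w i * ((1 - η) * μ)
        = (1 - η) * μ * ∑ i ∈ Finset.range D.m, D.s i * D.w i := by
      rw [Finset.mul_sum]; apply Finset.sum_congr rfl; intros; ring
    rw [h1, h2, CalibScore.posSel]
  refine ⟨hrule, hsel, ?_, ?_⟩
  · rw [CalibScore.ppv, hsel, hpos, CalibScore.ppv]
    rw [← hμ]
    have hμne : μ ≠ 0 := hμ0.ne'
    field_simp
  · rw [CalibScore.forr, hsel, hpos, CalibScore.forr]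
    have h1μ : (1 : ℝ) - μ ≠ 0 := by linarith
    rw [← hμ]
    field_simp
    ring
end

section
/- The feasible region C is star-convex with center (π, π): if (p, q) ∈ C, then for every η ∈ [0,1] the convex combination (η p + (1−η) π, η q + (1−η) π) also belongs to C; moreover if (p,q) is feasible with selection rate μ, then so is each such convex combination. -/
open Finset

lemma star_aux (D : CalibScore) (p q μ η : ℝ) (hη : η ∈ Set.Icc (0:ℝ) 1)
    (h : D.FeasibleWith μ p q) :
    D.FeasibleWith μ (η * p + (1 - η) * D.pi) (η * q + (1 - η) * D.pi) := by
  obtain ⟨hμ0, hμ1, t, ht, hrate, hppv, hforr⟩ := h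
  obtain ⟨hη0, hη1⟩ := hη
  set t' : ℕ → ℝ := fun i => η * t i + (1 - η) * μ with ht'
  have hrate' : D.selRate t' = μ := by
    unfold CalibScore.selRate at *
    have : ∀ i ∈ Finset.range D.m,
        D.w i * t' i = η * (D.w i * t i) + (1 - η) * μ * D.w i := by
      intro i _; simp only [ht']; ring
    rw [Finset.sum_congr rfl this, Finset.sum_add_distrib, ← Finset.mul_sum,
      ← Finset.mul_sum, hrate, D.w_sum]
    ring
  have hpos' : D.posSel t' = η * D.posSel t + (1 - η) * μ * D.pi := by
    unfold CalibScore.posSel CalibScore.pi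
    have : ∀ i ∈ Finset.range D.m,
        D.s i * D.w i * t' i = η * (D.s i * D.w i * t i)
          + (1 - η) * μ * (D.s i * D.w i) := by
      intro i _; simp only [ht']; ring
    rw [Finset.sum_congr rfl this, Finset.sum_add_distrib, ← Finset.mul_sum,
      ← Finset.mul_sum]
  refine ⟨hμ0, hμ1, t', ?_, hrate', ?_, ?_⟩
  · intro i hi
    obtain ⟨h0, h1⟩ := ht i hi
    constructor
    · have : 0 ≤ (1 - η) * μ := mul_nonneg (by linarith) hμ0.le
      have : 0 ≤ η * t i := mul_nonneg hη0 h0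
      simp only [ht']; linarith
    · simp only [ht']; nlinarith
  · unfold CalibScore.ppv at *
    rw [hrate', hpos', ← hppv, hrate]
    field_simp
  · unfold CalibScore.forr at *
    rw [hrate', hpos', ← hforr, hrate]
    have h1μ : (1 : ℝ) - μ ≠ 0 := by linarith
    field_simp
    ring

/-- The feasible region `C` is star-convex with center `(π, π)`:
if `(p, q) ∈ C` then for every `η ∈ [0,1]` the convex combination
`(η p + (1 − η) π, η q + (1 − η) π)` also belongs to `C`; moreover, if `(p, q)` is
feasible with selection rate `μ`, then so is each such convex combination. -/
theorem stmt6 (D : CalibScore) (p q : ℝ) :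
    (D.Feasible p q → ∀ η ∈ Set.Icc (0 : ℝ) 1,
      D.Feasible (η * p + (1 - η) * D.pi) (η * q + (1 - η) * D.pi)) ∧
    (∀ μ : ℝ, D.FeasibleWith μ p q → ∀ η ∈ Set.Icc (0 : ℝ) 1,
      D.FeasibleWith μ (η * p + (1 - η) * D.pi) (η * q + (1 - η) * D.pi)) := by
  refine ⟨?_, fun μ h η hη => star_aux D p q μ η hη h⟩
  rintro ⟨μ, h⟩ η hη
  exact ⟨μ, star_aux D p q μ η hη h⟩
end

section
/- For every k ∈ {1, …, m}, the breakpoint value p_k := p*(μ_k) = s_k + c_k/μ_k equals the conditional mean of the top k scores: p_k = (Σ_{i≤k} s_i P(S=s_i)) / (Σ_{i≤k} P(S=s_i)); moreover p_k is attained by the deterministic threshold classifier R defined by R = 1 iff S ≥ s_k, for which P(R=1) = μ_k and PPV(R) = p_k. -/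
open Finset

/-- For every `k ∈ {1, …, m}`, the breakpoint value
`p_k = p*(μ_k) = s_k + c_k/μ_k` equals the conditional mean of the top `k` scores,
`(∑_{i ≤ k} s_i P(S = s_i)) / (∑_{i ≤ k} P(S = s_i))`; moreover `p_k` is attained by
the deterministic threshold classifier `R = 1` iff `S ≥ s_k` (selection rule
`t i = 1` for `i ≤ k`, `0` otherwise), for which `P(R = 1) = μ_k` and `PPV(R) = p_k`. -/
theorem stmt9 (D : CalibScore) (k : ℕ) (hk1 : 1 ≤ k) (hkm : k ≤ D.m) :
    D.pkF k = (∑ i ∈ Finset.range k, D.s i * D.w i) / (∑ i ∈ Finset.range k, D.w i) ∧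
    (k < D.m → D.pStar (D.muk k) = D.pkF k) ∧
    D.selRate (fun i => if i < k then (1 : ℝ) else 0) = D.muk k ∧
    D.ppv (fun i => if i < k then (1 : ℝ) else 0) = D.pkF k := by

  -- notation
  set A : ℝ := ∑ i ∈ Finset.range k, D.s i * D.w i with hA_def
  set M : ℝ := D.muk k with hM_def
  have hk1m : k - 1 < D.m := lt_of_lt_of_le (Nat.sub_lt hk1 one_pos) hkm
  -- positivity of M
  have hMpos : 0 < M := by
    apply Finset.sum_pos
    · intro i hi
      exact D.w_pos i (lt_of_lt_of_le (Finset.mem_range.mp hi) hkm)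
    · exact ⟨0, Finset.mem_range.mpr hk1⟩
  -- c_k = A - s(k-1) * M
  have hsum1 : ∑ i ∈ Finset.range k, D.w i * (D.s i - D.s (k - 1)) = A - D.s (k - 1) * M := by
    rw [hA_def, hM_def]
    unfold CalibScore.muk
    rw [Finset.mul_sum, ← Finset.sum_sub_distrib]
    apply Finset.sum_congr rfl
    intro i _; ring
  have hck : D.ck k = A - D.s (k - 1) * M := by
    have hkk : k - 1 + 1 = k := Nat.succ_pred_eq_of_pos hk1
    rw [← hsum1]
    unfold CalibScore.ck
    rw [← hkk, Finset.sum_range_succ]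
    simp
  -- first conjunct
  have hpk : D.pkF k = A / M := by
    unfold CalibScore.pkF
    rw [hck, ← hM_def]
    field_simp
    ring
  -- selection rate of threshold rule
  have hsel : D.selRate (fun i => if i < k then (1 : ℝ) else 0) = M := by
    unfold CalibScore.selRate
    rw [hM_def]; unfold CalibScore.muk
    rw [← Finset.sum_subset (Finset.range_subset_range.mpr hkm)]
    · apply Finset.sum_congr rfl
      intro i hi
      simp [Finset.mem_range.mp hi]
    · intro i _ hi
      simp only [Finset.mem_range] at hi
      simp [hi]
  have hpos : D.posSel (fun i => if i < k then (1 : ℝ) else 0) = A := by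
    unfold CalibScore.posSel
    rw [hA_def]
    rw [← Finset.sum_subset (Finset.range_subset_range.mpr hkm)]
    · apply Finset.sum_congr rfl
      intro i hi
      simp [Finset.mem_range.mp hi]
    · intro i _ hi
      simp only [Finset.mem_range] at hi
      simp [hi]
  have hppv : D.ppv (fun i => if i < k then (1 : ℝ) else 0) = D.pkF k := by
    unfold CalibScore.ppv
    rw [hsel, hpos, hpk]
  refine ⟨hpk.trans rfl, ?_, hsel, hppv⟩
  -- the pStar part
  intro hklt
  -- 1 - M = sum of remaining weights, positive
  have hsplit : M + ∑ i ∈ Finset.Ico k D.m, D.w i = 1 := by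
    rw [hM_def]
    simp only [CalibScore.muk, Finset.range_eq_Ico]
    rw [Finset.sum_Ico_consecutive _ (Nat.zero_le k) hkm, ← Finset.range_eq_Ico, D.w_sum]
  have hrest : 0 < ∑ i ∈ Finset.Ico k D.m, D.w i := by
    apply Finset.sum_pos
    · intro i hi
      exact D.w_pos i (Finset.mem_Ico.mp hi).2
    · exact ⟨k, Finset.mem_Ico.mpr ⟨le_refl k, hklt⟩⟩
  have hMlt : M < 1 := by linarith
  -- π = A + B
  have hpisplit : D.pi = A + ∑ i ∈ Finset.Ico k D.m, D.s i * D.w i := by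
    rw [hA_def]
    simp only [CalibScore.pi, Finset.range_eq_Ico]
    rw [← Finset.sum_Ico_consecutive _ (Nat.zero_le k) hkm]
  -- s(k-1) * M ≤ A
  have hAge : D.s (k - 1) * M ≤ A := by
    rw [hM_def]; unfold CalibScore.muk
    rw [Finset.mul_sum]
    apply Finset.sum_le_sum
    intro i hi
    have hik : i < k := Finset.mem_range.mp hi
    have him : i < D.m := lt_of_lt_of_le hik hkm
    have hs : D.s (k - 1) ≤ D.s i := by
      rcases lt_or_eq_of_le (Nat.le_sub_one_of_lt hik) with h | h
      · exact le_of_lt (D.s_desc i (k - 1) h hk1m)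
      · rw [h]
    exact mul_le_mul_of_nonneg_right hs (le_of_lt (D.w_pos i him))
  -- B ≤ s(k-1) * (1 - M)
  have hBle : ∑ i ∈ Finset.Ico k D.m, D.s i * D.w i ≤ D.s (k - 1) * (1 - M) := by
    have h1 : D.s (k - 1) * (1 - M) = ∑ i ∈ Finset.Ico k D.m, D.s (k - 1) * D.w i := by
      rw [← Finset.mul_sum]; congr 1; linarith
    rw [h1]
    apply Finset.sum_le_sum
    intro i hi
    obtain ⟨hik, him⟩ := Finset.mem_Ico.mp hi
    have hs : D.s i ≤ D.s (k - 1) := le_of_lt (D.s_desc (k - 1) i (lt_of_lt_of_le (Nat.sub_lt hk1 one_pos) hik) him)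
    exact mul_le_mul_of_nonneg_right hs (le_of_lt (D.w_pos i him))
  have hs0 : 0 ≤ D.s (k - 1) := D.s_nonneg _ hk1m
  -- key: π * M ≤ A
  have hkey : D.pi * M ≤ A := by
    rw [hpisplit]
    nlinarith [mul_le_mul_of_nonneg_right hBle hMpos.le,
      mul_le_mul_of_nonneg_right hAge (by linarith : (0:ℝ) ≤ 1 - M)]
  have hpiA : D.pi ≤ A / M := by
    rw [le_div_iff₀ hMpos]; exact hkey
  -- bound: for any sel rule with rate M, posSel ≤ A
  have hbound : ∀ t : ℕ → ℝ, D.IsSelRule t → D.selRate t = M → D.posSel t ≤ A := by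
    intro t ht hrate
    have hnn : 0 ≤ ∑ i ∈ Finset.range D.m,
        (D.s i - D.s (k - 1)) * (D.w i * ((if i < k then (1:ℝ) else 0) - t i)) := by
      apply Finset.sum_nonneg
      intro i hi
      have him : i < D.m := Finset.mem_range.mp hi
      have hw : 0 ≤ D.w i := le_of_lt (D.w_pos i him)
      obtain ⟨ht0, ht1⟩ := ht i him
      by_cases hik : i < k
      · have hs : D.s (k - 1) ≤ D.s i := by
          rcases lt_or_eq_of_le (Nat.le_sub_one_of_lt hik) with h | h
          · exact le_of_lt (D.s_desc i (k - 1) h hk1m)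
          · rw [h]
        simp only [if_pos hik]
        apply mul_nonneg (by linarith) (mul_nonneg hw (by linarith))
      · have hs : D.s i ≤ D.s (k - 1) := le_of_lt
          (D.s_desc (k - 1) i (lt_of_lt_of_le (Nat.sub_lt hk1 one_pos)
            (Nat.le_of_not_lt hik)) him)
        simp only [if_neg hik]
        nlinarith [mul_nonpos_of_nonneg_of_nonpos hw (by linarith : (0:ℝ) - t i ≤ 0)]
    have hexp : ∑ i ∈ Finset.range D.m,
        (D.s i - D.s (k - 1)) * (D.w i * ((if i < k then (1:ℝ) else 0) - t i))
        = (D.posSel (fun i => if i < k then (1:ℝ) else 0) - D.posSel t)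
          - D.s (k - 1) * (D.selRate (fun i => if i < k then (1:ℝ) else 0) - D.selRate t) := by
      unfold CalibScore.posSel CalibScore.selRate
      rw [← Finset.sum_sub_distrib, ← Finset.sum_sub_distrib, Finset.mul_sum,
        ← Finset.sum_sub_distrib]
      apply Finset.sum_congr rfl
      intro i _; ring
    rw [hexp, hpos, hsel, hrate] at hnn
    linarith
  -- p_k is in the set and is an upper bound
  have hIsSel : D.IsSelRule (fun i => if i < k then (1:ℝ) else 0) := by
    intro i _
    by_cases h : i < k <;> simp [h]
  have hmem : D.pkF k ∈ {p | ∃ q, D.FeasibleWith M p q ∧ q ≤ D.pi ∧ D.pi ≤ p} := by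
    refine ⟨D.forr (fun i => if i < k then (1:ℝ) else 0),
      ⟨hMpos, hMlt, ⟨_, hIsSel, hsel, hppv, rfl⟩⟩, ?_, by rw [hpk]; exact hpiA⟩
    unfold CalibScore.forr
    rw [hsel, hpos, div_le_iff₀ (by linarith : (0:ℝ) < 1 - M), hpisplit]
    nlinarith
  have hub : ∀ p ∈ {p | ∃ q, D.FeasibleWith M p q ∧ q ≤ D.pi ∧ D.pi ≤ p}, p ≤ D.pkF k := by
    rintro p ⟨q, ⟨-, -, t, ht, hrate, hppvt, -⟩, -, -⟩
    rw [hpk, ← hppvt]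
    unfold CalibScore.ppv
    rw [hrate]
    exact (div_le_div_iff_of_pos_right hMpos).mpr (hbound t ht hrate)
  unfold CalibScore.pStar
  exact le_antisymm (csSup_le ⟨_, hmem⟩ hub) (le_csSup ⟨_, hub⟩ hmem)
end
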